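/- arXiv:1801.00196 — 6 statements merged into one kernel-verified Lean document; each statement's English description precedes it below -/
import Mathlib

section
/- Let (Z_t)_{t≥0} be a martingale with respect to a filtration (F_t)_{t≥0} with square-integrable increments, and suppose there is a constant M > 0 such that Z_{t+1} − Z_t ≤ M almost surely for all t. Let V_t = Σ_{i=1}^t Var(Z_i | F_{i−1}). Then for all z, v > 0, Pr[∃ t ≥ 1 : Z_t ≥ Z_0 + z and V_t ≤ v] ≤ exp(−z² / (2(v + Mz))). -/
open MeasureTheory Finset

private lemma fac_ge (n : ℕ) : 2 * 3 ^ n ≤ (n + 2).factorial := by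
  induction n with
  | zero => simp [Nat.factorial]
  | succ n ih =>
    have : (n + 3).factorial = (n + 3) * (n + 2).factorial := rfl
    rw [this, pow_succ]
    calc 2 * (3 ^ n * 3) = 3 * (2 * 3 ^ n) := by ring
    _ ≤ 3 * (n + 2).factorial := by exact Nat.mul_le_mul_left 3 ih
    _ ≤ (n + 3) * (n + 2).factorial := Nat.mul_le_mul_right _ (by omega)

private lemma exp_quad_nonpos {u : ℝ} (hu : u ≤ 0) : Real.exp u ≤ 1 + u + u ^ 2 / 2 := by
  set f : ℝ → ℝ := fun x => 1 + x + x ^ 2 / 2 - Real.exp x with hf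
  have hd : ∀ x : ℝ, HasDerivAt f (1 + x - Real.exp x) x := by
    intro x
    have h1 : HasDerivAt (fun x : ℝ => 1 + x + x ^ 2 / 2) (1 + x) x := by
      have := ((hasDerivAt_id x).const_add (1:ℝ)).add ((hasDerivAt_pow 2 x).div_const 2)
      exact this.congr_deriv (by norm_num)
    exact h1.sub (Real.hasDerivAt_exp x)
  have hanti : Antitone f := by
    have hdiff : Differentiable ℝ f := fun x => (hd x).differentiableAt
    refine antitone_of_deriv_nonpos hdiff fun x => ?_
    rw [(hd x).deriv]
    have := Real.add_one_le_exp x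
    linarith
  have := hanti hu
  simp only [hf] at this
  have h0 : (1:ℝ) + 0 + 0 ^ 2 / 2 - Real.exp 0 = 0 := by simp
  linarith [this, Real.exp_zero]

private lemma exp_quad {y u : ℝ} (hy0 : 0 ≤ y) (hy3 : y < 3) (hu : u ≤ y) :
    Real.exp u ≤ 1 + u + (1 / (2 * (1 - y / 3))) * u ^ 2 := by
  have hy3' : 0 < 1 - y / 3 := by linarith
  have hc : (1:ℝ)/2 ≤ 1 / (2 * (1 - y / 3)) := by
    rw [div_le_div_iff₀ (by norm_num) (by linarith)]
    nlinarith
  rcases le_or_gt u 0 with h0 | h0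
  · have := exp_quad_nonpos h0
    nlinarith [sq_nonneg u]
  · -- 0 < u ≤ y
    have hsum := Real.summable_pow_div_factorial u
    have hexp : Real.exp u = ∑' n : ℕ, u ^ n / n.factorial := by
      rw [Real.exp_eq_exp_ℝ, NormedSpace.exp_eq_tsum_div]
    have hshift : Summable (fun n : ℕ => u ^ (n + 2) / (n + 2).factorial) :=
      (summable_nat_add_iff 2).2 hsum
    have hsplit : Real.exp u = (1 + u) + ∑' n : ℕ, u ^ (n + 2) / (n + 2).factorial := by
      rw [hexp, ← hsum.sum_add_tsum_nat_add 2]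
      norm_num [Finset.sum_range_succ, Nat.factorial]
    have hgeo : Summable (fun n : ℕ => u ^ 2 / 2 * (y / 3) ^ n) :=
      (summable_geometric_of_lt_one (by positivity) (by linarith)).mul_left _
    have hterm : ∀ n : ℕ, u ^ (n + 2) / (n + 2).factorial ≤ u ^ 2 / 2 * (y / 3) ^ n := by
      intro n
      have hfac : (2 * 3 ^ n : ℝ) ≤ (n + 2).factorial := by exact_mod_cast fac_ge n
      have h3 : (0:ℝ) < 2 * 3 ^ n := by positivity
      have e0 : u ^ (n + 2) / (n + 2).factorial ≤ u ^ (n + 2) / (2 * 3 ^ n) :=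
        div_le_div_of_nonneg_left (by positivity) h3 hfac
      have e1 : u ^ (n + 2) / (2 * 3 ^ n) = u ^ 2 / 2 * (u / 3) ^ n := by
        rw [div_pow]; field_simp; ring
      have e2 : (u / 3) ^ n ≤ (y / 3) ^ n :=
        pow_le_pow_left₀ (by positivity) (by linarith) n
      have e3 : u ^ 2 / 2 * (u / 3) ^ n ≤ u ^ 2 / 2 * (y / 3) ^ n :=
        mul_le_mul_of_nonneg_left e2 (by positivity)
      linarith [e0, e1 ▸ e0]
    have htail : ∑' n : ℕ, u ^ (n + 2) / (n + 2).factorial ≤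
        ∑' n : ℕ, u ^ 2 / 2 * (y / 3) ^ n := hshift.tsum_le_tsum hterm hgeo
    have hgeosum : ∑' n : ℕ, u ^ 2 / 2 * (y / 3) ^ n = u ^ 2 / 2 * (1 - y / 3)⁻¹ := by
      rw [tsum_mul_left, tsum_geometric_of_lt_one (by positivity) (by linarith)]
    have : Real.exp u ≤ (1 + u) + u ^ 2 / 2 * (1 - y / 3)⁻¹ := by
      rw [hsplit, ← hgeosum]; linarith
    calc Real.exp u ≤ (1 + u) + u ^ 2 / 2 * (1 - y / 3)⁻¹ := this
    _ = 1 + u + (1 / (2 * (1 - y / 3))) * u ^ 2 := by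
        have : u ^ 2 / 2 * (1 - y / 3)⁻¹ = (1 / (2 * (1 - y / 3))) * u ^ 2 := by
          rw [one_div, mul_inv, mul_comm ((2:ℝ)⁻¹)]
          ring
        linarith

private lemma supermart_maximal {Ω : Type*} {m0 : MeasurableSpace Ω} {μ : Measure Ω}
    [IsProbabilityMeasure μ] (ℱ : Filtration ℕ m0) (W : ℕ → Ω → ℝ)
    (hW : Supermartingale W ℱ μ) (hpos : ∀ t ω, 0 ≤ W t ω) {ε : ℝ} (hε : 0 < ε) :
    μ {ω | ∃ t : ℕ, ε ≤ W t ω} ≤ ENNReal.ofReal ((∫ ω, W 0 ω ∂μ) / ε) := by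
  set I := ∫ ω, W 0 ω ∂μ with hI
  have step1 : ∀ n : ℕ, μ {ω | ∃ k ≤ n, ε ≤ W k ω} ≤ ENNReal.ofReal (I / ε) := by
    intro n
    set τ : Ω → WithTop ℕ := fun ω => (hittingBtwn W (Set.Ici ε) 0 n ω : ℕ) with hτdef
    have hτ : IsStoppingTime ℱ τ := hW.stronglyAdapted.adapted.isStoppingTime_hittingBtwn measurableSet_Ici
    have hτn : ∀ ω, τ ω ≤ n := fun ω => WithTop.coe_le_coe.mpr (hittingBtwn_le ω)
    have hint : Integrable (stoppedValue W τ) μ :=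
      integrable_stoppedValue ℕ hτ hW.integrable hτn
    -- optional stopping for supermartingale
    have hos : ∫ ω, stoppedValue W τ ω ∂μ ≤ I := by
      have h := hW.neg.expected_stoppedValue_mono (isStoppingTime_const ℱ 0) hτ
        (fun ω => WithTop.coe_le_coe.mpr (Nat.zero_le _)) hτn
      have h1 : stoppedValue (-W) (fun _ => WithTop.some (0:ℕ)) = fun ω => -(W 0 ω) := by
        ext ω; simp [stoppedValue]
      have h2 : stoppedValue (-W) τ = fun ω => -(stoppedValue W τ ω) := by
        ext ω; simp [stoppedValue]
      rw [h1, h2, integral_neg, integral_neg] at h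
      simpa [hI] using neg_le_neg_iff.mp h
    set B := {ω | ∃ k ≤ n, ε ≤ W k ω} with hB
    have hBeq : B = ⋃ k ∈ Finset.range (n + 1), {ω | ε ≤ W k ω} := by
      ext ω; simp [hB, Nat.lt_succ_iff]
    have hBmeas : MeasurableSet B := by
      rw [hBeq]
      exact MeasurableSet.biUnion (Finset.range (n+1)).countable_toSet fun k _ =>
        measurableSet_le measurable_const ((hW.stronglyMeasurable k).measurable.le (ℱ.le k))
    have hεB : ∀ ω ∈ B, ε ≤ stoppedValue W τ ω := by
      intro ω hω
      obtain ⟨k, hkn, hk⟩ := hω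
      exact stoppedValue_hittingBtwn_mem ⟨k, ⟨Nat.zero_le _, hkn⟩, hk⟩
    have key : ε * (μ B).toReal ≤ I := by
      refine le_trans (by rw [smul_eq_mul, mul_comm]; exact le_rfl) <| le_trans (setIntegral_ge_of_const_le hBmeas (measure_ne_top μ B) hεB
        hint.integrableOn) (le_trans ?_ hos)
      exact setIntegral_le_integral hint (ae_of_all _ fun ω => hpos _ ω)
    have : μ B = ENNReal.ofReal ((μ B).toReal) := (ENNReal.ofReal_toReal (measure_ne_top μ B)).symm
    rw [this]
    exact ENNReal.ofReal_le_ofReal ((le_div_iff₀ hε).mpr (by linarith [key]))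
  have hmono : Monotone fun n => {ω | ∃ k ≤ n, ε ≤ W k ω} := by
    intro a b hab ω ⟨k, hk, h⟩
    exact ⟨k, hk.trans hab, h⟩
  have hunion : {ω | ∃ t : ℕ, ε ≤ W t ω} = ⋃ n, {ω | ∃ k ≤ n, ε ≤ W k ω} := by
    ext ω
    simp only [Set.mem_setOf_eq, Set.mem_iUnion]
    exact ⟨fun ⟨t, ht⟩ => ⟨t, t, le_rfl, ht⟩, fun ⟨n, k, _, hk⟩ => ⟨k, hk⟩⟩
  rw [hunion, hmono.directed_le.measure_iUnion]
  exact iSup_le step1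


/-- **Freedman's martingale inequality** (Theorem 2.2 of Alon et al., used as
Theorem `thm:alon`): if `(Z t)` is a martingale w.r.t. the filtration `ℱ` with
square-integrable increments bounded above by `M`, and
`V t = ∑_{i=1}^t Var(Z i | ℱ (i-1)) = ∑_{i=1}^t E[(Z i - Z (i-1))^2 | ℱ (i-1)]`,
then for all `z, v > 0`,
`Pr[∃ t ≥ 1, Z t ≥ Z 0 + z ∧ V t ≤ v] ≤ exp (-z^2 / (2*(v + M*z)))`. -/
theorem freedman_martingale_inequality
    {Ω : Type*} {m0 : MeasurableSpace Ω} {μ : Measure Ω} [IsProbabilityMeasure μ]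
    (ℱ : Filtration ℕ m0) (Z : ℕ → Ω → ℝ)
    (hmart : Martingale Z ℱ μ)
    (hsq : ∀ t : ℕ, MemLp (fun ω => Z (t + 1) ω - Z t ω) 2 μ)
    (M : ℝ) (hM : 0 < M)
    (hbdd : ∀ t : ℕ, ∀ᵐ ω ∂μ, Z (t + 1) ω - Z t ω ≤ M)
    (V : ℕ → Ω → ℝ)
    (hV : ∀ t ω, V t ω =
      ∑ i ∈ Finset.Icc 1 t, (μ[fun ω' => (Z i ω' - Z (i - 1) ω') ^ 2|ℱ (i - 1)]) ω)
    (z v : ℝ) (hz : 0 < z) (hv : 0 < v) :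
    μ {ω | ∃ t : ℕ, 1 ≤ t ∧ Z 0 ω + z ≤ Z t ω ∧ V t ω ≤ v}
      ≤ ENNReal.ofReal (Real.exp (-z ^ 2 / (2 * (v + M * z)))) := by
  set s : ℝ := v + M * z with hs_def
  have hs : 0 < s := by positivity
  set l : ℝ := z / s with hl_def
  have hl : 0 < l := by positivity
  have hy0 : 0 < l * M := by positivity
  have hy1 : l * M < 1 := by
    rw [hl_def, div_mul_eq_mul_div, div_lt_one hs]
    rw [hs_def]; nlinarith
  have hy3 : l * M < 3 := hy1.trans (by norm_num)
  set c : ℝ := 1 / (2 * (1 - l * M / 3)) with hc_def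
  have hden : 0 < 1 - l * M / 3 := by linarith
  have hc0 : 0 < c := by rw [hc_def]; positivity
  -- V as functions
  have hVfun : ∀ t, V t = fun ω =>
      ∑ i ∈ Finset.Icc 1 t, (μ[fun ω' => (Z i ω' - Z (i - 1) ω') ^ 2|ℱ (i - 1)]) ω :=
    fun t => funext (hV t)
  have hV0 : V 0 = fun _ => 0 := by rw [hVfun]; simp
  set U : ℕ → Ω → ℝ := fun t => μ[fun ω' => (Z (t + 1) ω' - Z t ω') ^ 2|ℱ t] with hU_def
  have hVsucc : ∀ t, V (t + 1) = fun ω => V t ω + U t ω := by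
    intro t
    rw [hVfun, hVfun]
    funext ω
    rw [Finset.sum_Icc_succ_top (Nat.succ_le_succ (Nat.zero_le t))]
    simp [hU_def]
  have hUpos : ∀ t, 0 ≤ᵐ[μ] U t := fun t =>
    condExp_nonneg (ae_of_all _ fun ω => sq_nonneg _)
  have hVpos : ∀ t, 0 ≤ᵐ[μ] V t := by
    intro t
    have h : ∀ i : ℕ, 0 ≤ᵐ[μ] μ[fun ω' => (Z i ω' - Z (i - 1) ω') ^ 2|ℱ (i - 1)] :=
      fun i => condExp_nonneg (ae_of_all _ fun ω => sq_nonneg _)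
    filter_upwards [ae_all_iff.2 h] with ω hω
    rw [hVfun]
    exact Finset.sum_nonneg fun i _ => hω i
  set W : ℕ → Ω → ℝ := fun t ω => Real.exp (l * (Z t ω - Z 0 ω) - c * l ^ 2 * V t ω) with hW_def
  have hWpos : ∀ t ω, 0 < W t ω := fun t ω => Real.exp_pos _
  have hVmeas : ∀ t, StronglyMeasurable[ℱ t] (V t) := by
    intro t
    rw [hVfun]
    refine Finset.stronglyMeasurable_fun_sum _ fun i hi => ?_
    exact stronglyMeasurable_condExp.mono
      (ℱ.mono ((Nat.sub_le i 1).trans (Finset.mem_Icc.mp hi).2))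
  have hWmeas : ∀ t, StronglyMeasurable[ℱ t] (W t) := by
    intro t
    apply Real.continuous_exp.comp_stronglyMeasurable
    exact (((hmart.stronglyAdapted t).sub ((hmart.stronglyAdapted 0).mono (ℱ.mono (Nat.zero_le t)))).const_mul
      l).sub ((hVmeas t).const_mul (c * l ^ 2))
  have hZbdd : ∀ t : ℕ, ∀ᵐ ω ∂μ, Z t ω - Z 0 ω ≤ t * M := by
    intro t
    induction t with
    | zero => simp
    | succ t ih =>
      filter_upwards [ih, hbdd t] with ω h1 h2
      push_cast
      nlinarith
  have hWbdd : ∀ t : ℕ, ∀ᵐ ω ∂μ, ‖W t ω‖ ≤ Real.exp (l * (t * M)) := by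
    intro t
    filter_upwards [hZbdd t, hVpos t] with ω h1 h2
    rw [Real.norm_eq_abs, abs_of_pos (hWpos t ω)]
    apply Real.exp_le_exp.2
    have e1 : l * (Z t ω - Z 0 ω) ≤ l * (t * M) := mul_le_mul_of_nonneg_left h1 hl.le
    nlinarith [mul_nonneg (mul_nonneg hc0.le (sq_nonneg l)) h2]
  have hWint : ∀ t, Integrable (W t) μ := fun t =>
    Integrable.mono' (integrable_const _) (((hWmeas t).mono (ℱ.le t)).aestronglyMeasurable)
      (hWbdd t)
  have hsup : Supermartingale W ℱ μ := by
    refine supermartingale_nat hWmeas hWint fun t => ?_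
    set Δ : Ω → ℝ := fun ω => Z (t + 1) ω - Z t ω with hΔ_def
    have hΔint : Integrable Δ μ := (hmart.integrable (t + 1)).sub (hmart.integrable t)
    have hΔ2int : Integrable (fun ω => Δ ω ^ 2) μ := (hsq t).integrable_sq
    have hexpmeas : AEStronglyMeasurable (fun ω => Real.exp (l * Δ ω)) μ :=
      (Real.continuous_exp.comp_stronglyMeasurable
        (((((hmart.stronglyAdapted (t + 1)).mono (ℱ.le (t + 1))).sub
          ((hmart.stronglyAdapted t).mono (ℱ.le t)))).const_mul l)).aestronglyMeasurable
    have hexpbdd : ∀ᵐ ω ∂μ, ‖Real.exp (l * Δ ω)‖ ≤ Real.exp (l * M) := by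
      filter_upwards [hbdd t] with ω h
      rw [Real.norm_eq_abs, abs_of_pos (Real.exp_pos _)]
      exact Real.exp_le_exp.2 (mul_le_mul_of_nonneg_left h hl.le)
    have hexpint : Integrable (fun ω => Real.exp (l * Δ ω)) μ :=
      Integrable.mono' (integrable_const _) hexpmeas hexpbdd
    set A : Ω → ℝ := fun ω => W t ω * Real.exp (-(c * l ^ 2) * U t ω) with hA_def
    have hApos : ∀ ω, 0 ≤ A ω := fun ω =>
      mul_nonneg (hWpos t ω).le (Real.exp_pos _).le
    have hAmeas : StronglyMeasurable[ℱ t] A :=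
      (hWmeas t).mul (Real.continuous_exp.comp_stronglyMeasurable
        (stronglyMeasurable_condExp.const_mul _))
    have hAbdd : ∀ᵐ ω ∂μ, ‖A ω‖ ≤ Real.exp (l * (t * M)) := by
      filter_upwards [hWbdd t, hUpos t] with ω h1 h2
      rw [Real.norm_eq_abs, abs_of_nonneg (hApos ω)]
      calc W t ω * Real.exp (-(c * l ^ 2) * U t ω) ≤ W t ω * 1 := by
            refine mul_le_mul_of_nonneg_left ?_ (hWpos t ω).le
            rw [← Real.exp_zero]
            apply Real.exp_le_exp.2
            have : 0 ≤ (c * l ^ 2) * U t ω := mul_nonneg (by positivity) h2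
            linarith
        _ = W t ω := mul_one _
        _ ≤ Real.exp (l * (t * M)) := by
            rw [Real.norm_eq_abs] at h1
            exact (le_abs_self _).trans h1
    have hWsucc : W (t + 1) = fun ω => A ω * Real.exp (l * Δ ω) := by
      funext ω
      show Real.exp (l * (Z (t+1) ω - Z 0 ω) - c * l ^ 2 * V (t+1) ω) = _
      rw [hVsucc t]
      simp only [hA_def, hΔ_def]
      show Real.exp (l * (Z (t+1) ω - Z 0 ω) - c * l ^ 2 * (V t ω + U t ω))
        = Real.exp (l * (Z t ω - Z 0 ω) - c * l ^ 2 * V t ω)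
          * Real.exp (-(c * l ^ 2) * U t ω) * Real.exp (l * (Z (t+1) ω - Z t ω))
      rw [← Real.exp_add, ← Real.exp_add]
      congr 1
      ring
    have hpull : μ[A * fun ω => Real.exp (l * Δ ω)|ℱ t]
        =ᵐ[μ] A * μ[fun ω => Real.exp (l * Δ ω)|ℱ t] :=
      condExp_stronglyMeasurable_mul_of_bound (ℱ.le t) hAmeas hexpint _ hAbdd
    -- conditional mean of increment vanishes
    have hmean : μ[Δ|ℱ t] =ᵐ[μ] 0 := by
      have h1 : μ[Z (t+1) - Z t|ℱ t] =ᵐ[μ] μ[Z (t+1)|ℱ t] - μ[Z t|ℱ t] :=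
        condExp_sub (hmart.integrable (t + 1)) (hmart.integrable t) _
      have h2 : μ[Z (t+1)|ℱ t] =ᵐ[μ] Z t := hmart.condExp_ae_eq (Nat.le_succ t)
      have h3 : μ[Z t|ℱ t] = Z t :=
        condExp_of_stronglyMeasurable (ℱ.le t) (hmart.stronglyAdapted t) (hmart.integrable t)
      have hΔeq : Δ = Z (t+1) - Z t := rfl
      rw [hΔeq]
      filter_upwards [h1, h2] with ω e1 e2
      simp only [Pi.sub_apply, Pi.zero_apply] at *
      rw [e1, e2, h3]
      ring
    have hptwise : ∀ᵐ ω ∂μ, Real.exp (l * Δ ω) ≤ 1 + l * Δ ω + (c * l ^ 2) * Δ ω ^ 2 := by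
      filter_upwards [hbdd t] with ω h
      have he := exp_quad (y := l * M) hy0.le hy3 (u := l * Δ ω)
        (mul_le_mul_of_nonneg_left h hl.le)
      have : c * (l * Δ ω) ^ 2 = (c * l ^ 2) * Δ ω ^ 2 := by ring
      rw [hc_def] at this ⊢
      linarith [he, this ▸ le_refl (c * (l * Δ ω) ^ 2)]
    have hsumint : Integrable (fun ω => 1 + l * Δ ω + (c * l ^ 2) * Δ ω ^ 2) μ :=
      ((integrable_const (1:ℝ)).add (hΔint.const_mul l)).add (hΔ2int.const_mul _)
    have hcond1 : μ[fun ω => Real.exp (l * Δ ω)|ℱ t]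
        ≤ᵐ[μ] μ[fun ω => 1 + l * Δ ω + (c * l ^ 2) * Δ ω ^ 2|ℱ t] :=
      condExp_mono hexpint hsumint hptwise
    have hcond2 : μ[fun ω => 1 + l * Δ ω + (c * l ^ 2) * Δ ω ^ 2|ℱ t]
        =ᵐ[μ] fun ω => 1 + (c * l ^ 2) * U t ω := by
      have hsplit : (fun ω => 1 + l * Δ ω + (c * l ^ 2) * Δ ω ^ 2)
          = (fun ω => 1 + l * Δ ω) + (c * l ^ 2) • (fun ω => Δ ω ^ 2) := rfl
      have e1 : μ[(fun ω => 1 + l * Δ ω) + (c * l ^ 2) • (fun ω => Δ ω ^ 2)|ℱ t]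
          =ᵐ[μ] μ[fun ω => 1 + l * Δ ω|ℱ t] + μ[(c * l ^ 2) • fun ω => Δ ω ^ 2|ℱ t] :=
        condExp_add ((integrable_const (1:ℝ)).add (hΔint.const_mul l))
          (hΔ2int.const_mul _) _
      have hsplit2 : (fun ω => 1 + l * Δ ω) = (fun _ : Ω => (1:ℝ)) + l • Δ := rfl
      have e2 : μ[(fun _ : Ω => (1:ℝ)) + l • Δ|ℱ t]
          =ᵐ[μ] μ[fun _ : Ω => (1:ℝ)|ℱ t] + μ[l • Δ|ℱ t] :=
        condExp_add (integrable_const _) (hΔint.const_mul l) _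
      have e3 : μ[fun _ : Ω => (1:ℝ)|ℱ t] = fun _ => 1 := condExp_const (ℱ.le t) _
      have e4 : μ[l • Δ|ℱ t] =ᵐ[μ] l • μ[Δ|ℱ t] := condExp_smul l Δ _
      have e5 : μ[(c * l ^ 2) • fun ω => Δ ω ^ 2|ℱ t]
          =ᵐ[μ] (c * l ^ 2) • μ[fun ω => Δ ω ^ 2|ℱ t] := condExp_smul _ _ _
      have hUeq : μ[fun ω => Δ ω ^ 2|ℱ t] = U t := rfl
      have e3' : ∀ ω, (μ[fun _ : Ω => (1:ℝ)|ℱ t]) ω = 1 := fun ω => by rw [e3]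
      rw [hsplit, hsplit2]
      filter_upwards [e1, e2, e4, e5, hmean] with ω f1 f2 f4 f5 fm
      rw [hsplit2] at f1
      simp only [Pi.add_apply, Pi.smul_apply, smul_eq_mul, Pi.zero_apply] at f1 f2 f4 f5 fm
      rw [f1, f2, f4, f5, e3' ω, fm, hUeq]
      ring
    -- put everything together
    rw [hWsucc]
    have hexpUbd : ∀ᵐ ω ∂μ, 1 + (c * l ^ 2) * U t ω ≤ Real.exp ((c * l ^ 2) * U t ω) :=
      ae_of_all _ fun ω => by linarith [Real.add_one_le_exp ((c * l ^ 2) * U t ω)]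
    filter_upwards [hpull, hcond1, hcond2, hexpUbd] with ω e1 e2 e3 e4
    calc (μ[A * fun ω => Real.exp (l * Δ ω)|ℱ t]) ω
        = A ω * (μ[fun ω => Real.exp (l * Δ ω)|ℱ t]) ω := by
          simpa using e1
      _ ≤ A ω * (1 + (c * l ^ 2) * U t ω) := by
          apply mul_le_mul_of_nonneg_left _ (hApos ω)
          exact le_trans e2 (le_of_eq e3)
      _ ≤ A ω * Real.exp ((c * l ^ 2) * U t ω) := mul_le_mul_of_nonneg_left e4 (hApos ω)
      _ = W t ω := by
          show W t ω * Real.exp (-(c * l ^ 2) * U t ω) * Real.exp ((c * l ^ 2) * U t ω) = W t ω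
          rw [mul_assoc, ← Real.exp_add]
          simp
  -- conclusion
  set a : ℝ := Real.exp (l * z - c * l ^ 2 * v) with ha_def
  have hsubset : {ω | ∃ t : ℕ, 1 ≤ t ∧ Z 0 ω + z ≤ Z t ω ∧ V t ω ≤ v}
      ⊆ {ω | ∃ t : ℕ, a ≤ W t ω} := by
    rintro ω ⟨t, -, h1, h2⟩
    refine ⟨t, ?_⟩
    rw [ha_def]
    apply Real.exp_le_exp.2
    have e1 : l * z ≤ l * (Z t ω - Z 0 ω) := mul_le_mul_of_nonneg_left (by linarith) hl.le
    nlinarith [mul_nonneg (mul_nonneg hc0.le (sq_nonneg l)) (sub_nonneg.2 h2),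
      mul_le_mul_of_nonneg_left h2 (mul_nonneg hc0.le (sq_nonneg l))]
  have hW0 : (∫ ω, W 0 ω ∂μ) = 1 := by
    have : W 0 = fun _ => 1 := by
      funext ω
      rw [hW_def]
      simp [hV0]
    rw [this]
    simp
  have hmax := supermart_maximal ℱ W hsup (fun t ω => (hWpos t ω).le) (ε := a) (Real.exp_pos _)
  refine le_trans (measure_mono hsubset) (le_trans hmax ?_)
  rw [hW0, ha_def, one_div, ← Real.exp_neg]
  apply ENNReal.ofReal_le_ofReal
  apply Real.exp_le_exp.2
  -- arithmetic: z^2/(2s) ≤ l z - c l² v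
  have key : z ^ 2 / (2 * s) ≤ l * z - c * l ^ 2 * v := by
    have h2 : (0:ℝ) < 3 * v + 2 * M * z := by positivity
    have hceq : c = 3 * s / (2 * (3 * v + 2 * M * z)) := by
      rw [hc_def, hl_def, eq_div_iff (by positivity)]
      have h3 : 1 - z / s * M / 3 = (3 * v + 2 * M * z) / (3 * s) := by
        field_simp
        rw [hs_def]; ring
      rw [h3]
      field_simp
    have hdiff : l * z - c * l ^ 2 * v - z ^ 2 / (2 * s)
        = M * z ^ 3 / (s * (3 * v + 2 * M * z)) := by
      rw [hceq, hl_def]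
      field_simp
      ring
    have hpos : 0 ≤ M * z ^ 3 / (s * (3 * v + 2 * M * z)) := by positivity
    linarith [hdiff ▸ hpos]
  have : -z ^ 2 / (2 * (v + M * z)) = -(z ^ 2 / (2 * s)) := by rw [hs_def]; ring
  rw [this]
  linarith
end

section
/- Let (F_i)_{i≥0} be a filtration and (χ_i)_{i≥1} a sequence of {0,1}-valued random variables such that χ_i is F_i-measurable for each i. Let P_i = E[χ_i | F_{i−1}] and Z_t = Σ_{i=1}^t (χ_i − P_i). Then for all z, v > 0, Pr[∃ t ≥ 1 : Z_t ≥ z and Σ_{i=1}^t P_i ≤ v] ≤ exp(−z² / (2(v + z))). -/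
open MeasureTheory Finset

lemma exp_sub_quad_ineq {x : ℝ} (hx : 0 ≤ x) :
    2*(1-x)*(Real.exp x - 1 - x) ≤ x^2 := by
  have hderiv : ∀ y : ℝ, HasDerivAt (fun u => u^2 - 2*(1-u)*(Real.exp u - 1 - u))
      (2*y*(Real.exp y - 1)) y := by
    intro y
    have h1 : HasDerivAt (fun u : ℝ => u^2) (2*y) y := by
      simpa using (hasDerivAt_pow 2 y)
    have h2 : HasDerivAt (fun u : ℝ => 2*(1-u)) (-2) y := by
      simpa using (((hasDerivAt_id y).const_sub 1).const_mul 2)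
    have h3 : HasDerivAt (fun u : ℝ => Real.exp u - 1 - u) (Real.exp y - 1) y := by
      exact ((Real.hasDerivAt_exp y).sub_const 1).sub (hasDerivAt_id' y)
    have := h1.sub (h2.mul h3)
    exact this.congr_deriv (by ring)
  have hmono : MonotoneOn (fun u : ℝ => u^2 - 2*(1-u)*(Real.exp u - 1 - u)) (Set.Ici 0) := by
    refine monotoneOn_of_deriv_nonneg (convex_Ici 0) ?_ ?_ ?_
    · exact Continuous.continuousOn (by continuity)
    · intro y hy
      exact (hderiv y).differentiableAt.differentiableWithinAt
    · intro y hy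
      rw [(hderiv y).deriv]
      have hy0 : 0 < y := by simpa [interior_Ici] using hy
      have : (1:ℝ) ≤ Real.exp y := Real.one_le_exp hy0.le
      nlinarith
  have h0 := hmono (Set.mem_Ici.2 le_rfl) (Set.mem_Ici.2 hx) hx
  simp only [Real.exp_zero] at h0
  nlinarith [h0]

/-- Corollary `cor:martbound`: if `χ i` are `{0,1}`-valued random variables with `χ i`
measurable w.r.t. `ℱ i`, `P i = E[χ i | ℱ (i-1)]` and `Z t = ∑_{i=1}^t (χ i - P i)`, then
for all `z, v > 0`,
`Pr[∃ t ≥ 1, Z t ≥ z ∧ ∑_{i=1}^t P i ≤ v] ≤ exp (-z^2 / (2*(v + z)))`. -/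
theorem repeat_martingale_bound
    {Ω : Type*} {m0 : MeasurableSpace Ω} {μ : Measure Ω} [IsProbabilityMeasure μ]
    (ℱ : Filtration ℕ m0) (χ : ℕ → Ω → ℝ)
    (hmeas : ∀ i : ℕ, 1 ≤ i → StronglyMeasurable[ℱ i] (χ i))
    (hval : ∀ i : ℕ, 1 ≤ i → ∀ ω, χ i ω = 0 ∨ χ i ω = 1)
    (P : ℕ → Ω → ℝ) (hP : ∀ i : ℕ, 1 ≤ i → P i = μ[χ i|ℱ (i - 1)])
    (Z : ℕ → Ω → ℝ)
    (hZ : ∀ t ω, Z t ω = ∑ i ∈ Finset.Icc 1 t, (χ i ω - P i ω))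
    (z v : ℝ) (hz : 0 < z) (hv : 0 < v) :
    μ {ω | ∃ t : ℕ, 1 ≤ t ∧ z ≤ Z t ω ∧ ∑ i ∈ Finset.Icc 1 t, P i ω ≤ v}
      ≤ ENNReal.ofReal (Real.exp (-z ^ 2 / (2 * (v + z)))) := by
  have hvz : (0:ℝ) < v + z := by linarith
  set lam : ℝ := z / (v + z) with hlam_def
  have hlam_pos : 0 < lam := div_pos hz hvz
  have hlam_lt : lam < 1 := by rw [hlam_def, div_lt_one hvz]; linarith
  set s : ℝ := Real.exp lam - 1 with hs_def
  have hexp_ge : lam + 1 ≤ Real.exp lam := Real.add_one_le_exp lam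
  have hs_nonneg : 0 ≤ s := by simp only [hs_def]; linarith
  set c : ℝ := s - lam with hc_def
  have hc_nonneg : 0 ≤ c := by simp only [hc_def, hs_def]; linarith
  have hlamval : lam * (v + z) = z := by
    rw [hlam_def]; field_simp
  -- the key scalar inequality
  have hkey : z^2 / (2*(v+z)) ≤ lam*z - c*v := by
    have h1 : 2*(1-lam)*c ≤ lam^2 := by
      simpa [hc_def, hs_def] using exp_sub_quad_ineq hlam_pos.le
    have hv2 : (v+z)*(1-lam) = v := by linear_combination - hlamval
    have h2 : 2*c*v ≤ lam^2*(v+z) := by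
      calc 2*c*v = (2*(1-lam)*c)*(v+z) := by linear_combination (-2*c)*hv2
        _ ≤ lam^2*(v+z) := mul_le_mul_of_nonneg_right h1 hvz.le
    have h3 : lam^2*(v+z) = lam*z := by linear_combination lam*hlamval
    have h4 : 2*c*v*(v+z) ≤ lam*z*(v+z) :=
      mul_le_mul_of_nonneg_right (h2.trans_eq h3) hvz.le
    have e1 : lam*z*(v+z) = z^2 := by linear_combination z*hlamval
    rw [div_le_iff₀ (by positivity)]
    nlinarith [h4, e1]
  set C : ℝ := Real.exp (lam*z - c*v) with hC_def
  have hC_pos : 0 < C := Real.exp_pos _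
  -- the exponential supermartingale
  set M : ℕ → Ω → ℝ := fun t ω => Real.exp (lam * Z t ω - c * ∑ i ∈ Icc 1 t, P i ω)
    with hM_def
  have hM_pos : ∀ t ω, 0 < M t ω := fun t ω => Real.exp_pos _
  have hM0 : M 0 = fun _ => 1 := by
    funext ω
    simp [hM_def, hZ 0 ω]
  have hZχ : ∀ t ω, lam * Z t ω - c * ∑ i ∈ Icc 1 t, P i ω
      = lam * ∑ i ∈ Icc 1 t, χ i ω - s * ∑ i ∈ Icc 1 t, P i ω := by
    intro t ω
    rw [hZ t ω, Finset.sum_sub_distrib]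
    ring
  -- measurability of P
  have hPmeas : ∀ i : ℕ, 1 ≤ i → StronglyMeasurable[ℱ (i-1)] (P i) := by
    intro i hi; rw [hP i hi]; exact stronglyMeasurable_condExp
  have hPmeasF : ∀ i t : ℕ, 1 ≤ i → i ≤ t → StronglyMeasurable[ℱ t] (P i) :=
    fun i t hi hit => (hPmeas i hi).mono (ℱ.mono (le_trans (Nat.sub_le i 1) hit))
  have hχint : ∀ i : ℕ, 1 ≤ i → Integrable (χ i) μ := by
    intro i hi
    refine Integrable.mono' (integrable_const 1)
      ((hmeas i hi).mono (ℱ.le i)).aestronglyMeasurable ?_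
    refine Filter.Eventually.of_forall fun ω => ?_
    rcases hval i hi ω with h|h <;> simp [h]
  have hPnonneg : ∀ᵐ ω ∂μ, ∀ i : ℕ, 1 ≤ i → 0 ≤ P i ω := by
    rw [ae_all_iff]
    intro i
    by_cases hi : 1 ≤ i
    · have h0 : (0:Ω → ℝ) ≤ᵐ[μ] μ[χ i|ℱ (i-1)] := by
        refine condExp_nonneg ?_
        refine Filter.Eventually.of_forall fun ω => ?_
        rcases hval i hi ω with h|h <;> simp [h]
      rw [hP i hi]
      filter_upwards [h0] with ω hω using fun _ => hω
    · exact Filter.Eventually.of_forall fun ω h => absurd h hi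
  -- adaptedness of M
  have hMadapted : StronglyAdapted ℱ M := by
    intro t
    have hsum1 : StronglyMeasurable[ℱ t] (fun ω => ∑ i ∈ Icc 1 t, P i ω) := by
      refine Finset.stronglyMeasurable_fun_sum _ fun i hi => ?_
      exact hPmeasF i t (mem_Icc.1 hi).1 (mem_Icc.1 hi).2
    have hsum2 : StronglyMeasurable[ℱ t] (fun ω => Z t ω) := by
      have : (fun ω => Z t ω) = fun ω => ∑ i ∈ Icc 1 t, (χ i ω - P i ω) := by
        funext ω; exact hZ t ω
      rw [this]
      refine Finset.stronglyMeasurable_fun_sum _ fun i hi => ?_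
      exact ((hmeas i (mem_Icc.1 hi).1).mono (ℱ.mono (mem_Icc.1 hi).2)).sub
        (hPmeasF i t (mem_Icc.1 hi).1 (mem_Icc.1 hi).2)
    exact Real.continuous_exp.comp_stronglyMeasurable
      ((hsum2.const_mul lam).sub (hsum1.const_mul c))
  -- integrability of M
  have hχle : ∀ t ω, ∑ i ∈ Icc 1 t, χ i ω ≤ t := by
    intro t ω
    calc ∑ i ∈ Icc 1 t, χ i ω ≤ ∑ i ∈ Icc 1 t, (1:ℝ) := by
          refine Finset.sum_le_sum fun i hi => ?_
          rcases hval i (mem_Icc.1 hi).1 ω with h|h <;> simp [h]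
      _ = t := by simp
  have hMint : ∀ t, Integrable (M t) μ := by
    intro t
    refine Integrable.mono' (integrable_const (Real.exp (lam * t)))
      ((hMadapted t).mono (ℱ.le t)).aestronglyMeasurable ?_
    filter_upwards [hPnonneg] with ω hω
    rw [Real.norm_eq_abs, abs_of_pos (hM_pos t ω), hM_def]
    simp only
    rw [hZχ t ω]
    apply Real.exp_le_exp.2
    have h2 : 0 ≤ ∑ i ∈ Icc 1 t, P i ω :=
      Finset.sum_nonneg fun i hi => hω i (mem_Icc.1 hi).1
    have h1 := hχle t ω
    nlinarith [hlam_pos.le, hs_nonneg]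
  -- one-step supermartingale inequality
  have hstep : ∀ n : ℕ, μ[M (n+1)|ℱ n] ≤ᵐ[μ] M n := by
    intro n
    have hPn : P (n+1) = μ[χ (n+1)|ℱ n] := by
      simpa using hP (n+1) (Nat.le_add_left 1 n)
    set G : Ω → ℝ := fun ω => M n ω * Real.exp (-(s * P (n+1) ω)) with hG_def
    set g : Ω → ℝ := fun ω => 1 + s * χ (n+1) ω with hg_def
    have hGmeas : StronglyMeasurable[ℱ n] G := by
      refine (hMadapted n).mul ?_
      refine Real.continuous_exp.comp_stronglyMeasurable ?_
      have hPm : StronglyMeasurable[ℱ n] (P (n+1)) := by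
        simpa using hPmeas (n+1) (Nat.le_add_left 1 n)
      exact (hPm.const_mul s).neg
    have hfact : M (n+1) = G * g := by
      funext ω
      have hicc : Icc 1 (n+1) = insert (n+1) (Icc 1 n) := by
        ext j; simp only [Finset.mem_Icc, Finset.mem_insert]; omega
      have hnotmem : (n+1) ∉ Icc 1 n := by simp
      have hexpχ : Real.exp (lam * χ (n+1) ω) = 1 + s * χ (n+1) ω := by
        rcases hval (n+1) (Nat.le_add_left 1 n) ω with h|h <;> simp [h, hs_def]
      show M (n+1) ω = (M n ω * Real.exp (-(s * P (n+1) ω))) * (1 + s * χ (n+1) ω)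
      simp only [hM_def]
      rw [hZχ (n+1) ω, hZχ n ω, ← hexpχ, ← Real.exp_add, ← Real.exp_add]
      congr 1
      rw [hicc, Finset.sum_insert hnotmem, Finset.sum_insert hnotmem]
      ring
    have hg_int : Integrable g μ := by
      refine (integrable_const (1:ℝ)).add ?_
      exact (hχint (n+1) (Nat.le_add_left 1 n)).const_mul s
    have hGg_int : Integrable (G * g) μ := hfact ▸ hMint (n+1)
    have hpull : μ[G * g|ℱ n] =ᵐ[μ] G * μ[g|ℱ n] :=
      condExp_mul_of_stronglyMeasurable_left hGmeas hGg_int hg_int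
    have hcondg : μ[g|ℱ n] =ᵐ[μ] fun ω => 1 + s * P (n+1) ω := by
      have hgeq : g = (fun _ => (1:ℝ)) + s • (χ (n+1)) := by
        funext ω; simp [hg_def]
      rw [hgeq]
      refine (condExp_add (integrable_const 1) ((hχint (n+1)
        (Nat.le_add_left 1 n)).smul s) _).trans ?_
      have h1 : μ[(fun _ => (1:ℝ))|ℱ n] = fun _ => (1:ℝ) := condExp_const (ℱ.le n) 1
      have h2 : μ[s • (χ (n+1))|ℱ n] =ᵐ[μ] s • μ[χ (n+1)|ℱ n] := condExp_smul s (χ (n+1)) _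
      rw [h1]
      filter_upwards [h2] with ω hω
      simp only [Pi.add_apply, Pi.smul_apply, smul_eq_mul] at hω ⊢
      rw [hω, hPn]
    have hptwise : ∀ ω, G ω * (1 + s * P (n+1) ω) ≤ M n ω := by
      intro ω
      have h1 : s * P (n+1) ω + 1 ≤ Real.exp (s * P (n+1) ω) :=
        Real.add_one_le_exp _
      have hMn : 0 < M n ω := hM_pos n ω
      have hE : 0 < Real.exp (-(s * P (n+1) ω)) := Real.exp_pos _
      have h2 : Real.exp (-(s * P (n+1) ω)) * (1 + s * P (n+1) ω) ≤ 1 := by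
        calc Real.exp (-(s * P (n+1) ω)) * (1 + s * P (n+1) ω)
            ≤ Real.exp (-(s * P (n+1) ω)) * Real.exp (s * P (n+1) ω) := by
              apply mul_le_mul_of_nonneg_left _ hE.le
              linarith
          _ = 1 := by rw [← Real.exp_add]; simp
      calc G ω * (1 + s * P (n+1) ω)
          = M n ω * (Real.exp (-(s * P (n+1) ω)) * (1 + s * P (n+1) ω)) := by
            rw [hG_def]; ring
        _ ≤ M n ω * 1 := mul_le_mul_of_nonneg_left h2 hMn.le
        _ = M n ω := mul_one _
    rw [hfact]
    calc μ[G * g|ℱ n] =ᵐ[μ] G * μ[g|ℱ n] := hpull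
      _ ≤ᵐ[μ] M n := by
        filter_upwards [hcondg] with ω hω
        simp only [Pi.mul_apply]
        rw [hω]
        exact hptwise ω
  have hsuper : Supermartingale M ℱ μ := supermartingale_nat hMadapted hMint hstep
  -- Doob-type maximal inequality for the nonnegative supermartingale M
  set A : ℕ → Set Ω := fun n => {ω | ∃ t, t ≤ n ∧ C ≤ M t ω} with hA_def
  have hA_meas : ∀ n, MeasurableSet (A n) := by
    intro n
    have : A n = ⋃ t : ℕ, ⋃ (_ : t ≤ n), {ω | C ≤ M t ω} := by
      ext ω; simp [hA_def]
    rw [this]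
    exact MeasurableSet.iUnion fun t => MeasurableSet.iUnion fun _ =>
      measurableSet_le measurable_const ((hMadapted t).mono (ℱ.le t)).measurable
  have hmax : ∀ n : ℕ, μ (A n) ≤ ENNReal.ofReal (1/C) := by
    intro n
    set τ : Ω → WithTop ℕ := fun ω => (hittingBtwn M {y : ℝ | C ≤ y} 0 n ω : ℕ) with hτ_def
    have hτ_stop : IsStoppingTime ℱ τ :=
      hsuper.stronglyAdapted.adapted.isStoppingTime_hittingBtwn measurableSet_Ici
    have hτ_le : ∀ ω, τ ω ≤ n := fun ω => WithTop.coe_le_coe.2 (hittingBtwn_le ω)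
    have hSV_int : Integrable (stoppedValue M τ) μ := by
      have h1 : Integrable (stoppedValue (-M) τ) μ :=
        hsuper.neg.integrable_stoppedValue hτ_stop hτ_le
      have h2 : stoppedValue (-M) τ = -(stoppedValue M τ) := rfl
      rw [h2] at h1
      simpa using h1.neg
    have hEV : ∫ ω, stoppedValue M τ ω ∂μ ≤ 1 := by
      have h := hsuper.neg.expected_stoppedValue_mono (isStoppingTime_const ℱ 0)
        hτ_stop (fun ω => zero_le) hτ_le
      have h2 : stoppedValue (-M) τ = -(stoppedValue M τ) := rfl
      have h3 : stoppedValue (-M) (fun _ => WithTop.some (0:ℕ)) = -(stoppedValue M (fun _ => WithTop.some (0:ℕ))) := rfl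
      rw [h2, h3] at h
      simp only [Pi.neg_apply] at h
      rw [integral_neg, integral_neg, neg_le_neg_iff] at h
      have h4 : stoppedValue M (fun _ => WithTop.some (0:ℕ)) = fun ω => M 0 ω := rfl
      rw [h4] at h
      calc ∫ ω, stoppedValue M τ ω ∂μ ≤ ∫ ω, M 0 ω ∂μ := h
        _ = 1 := by rw [hM0]; simp
    have hSV_on : ∀ ω ∈ A n, C ≤ stoppedValue M τ ω := by
      intro ω hω
      obtain ⟨t, ht, hC⟩ := hω
      have hmem : ∃ j ∈ Set.Icc 0 n, M j ω ∈ {y : ℝ | C ≤ y} := ⟨t, ⟨Nat.zero_le _, ht⟩, hC⟩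
      exact stoppedValue_hittingBtwn_mem hmem
    have hconst : C * (μ (A n)).toReal ≤ ∫ ω in A n, stoppedValue M τ ω ∂μ :=
      setIntegral_ge_of_const_le_real (hA_meas n) (measure_ne_top μ _) hSV_on
        hSV_int.integrableOn
    have hfull : ∫ ω in A n, stoppedValue M τ ω ∂μ ≤ ∫ ω, stoppedValue M τ ω ∂μ := by
      refine setIntegral_le_integral hSV_int ?_
      exact Filter.Eventually.of_forall fun ω => (hM_pos _ ω).le
    have htoReal : (μ (A n)).toReal ≤ 1/C := by
      rw [le_div_iff₀ hC_pos]
      nlinarith [hconst, hfull, hEV]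
    rw [← ENNReal.ofReal_toReal (measure_ne_top μ (A n))]
    exact ENNReal.ofReal_le_ofReal htoReal
  -- event inclusion
  have hsubset : {ω | ∃ t : ℕ, 1 ≤ t ∧ z ≤ Z t ω ∧ ∑ i ∈ Finset.Icc 1 t, P i ω ≤ v}
      ⊆ ⋃ n, A n := by
    rintro ω ⟨t, ht1, hzt, hpv⟩
    refine Set.mem_iUnion.2 ⟨t, t, le_rfl, ?_⟩
    rw [hC_def, hM_def]
    apply Real.exp_le_exp.2
    have h1 : lam * z ≤ lam * Z t ω := mul_le_mul_of_nonneg_left hzt hlam_pos.le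
    have h2 : c * ∑ i ∈ Icc 1 t, P i ω ≤ c * v := mul_le_mul_of_nonneg_left hpv hc_nonneg
    linarith
  have hAmono : Monotone A := by
    intro n m hnm ω hω
    obtain ⟨t, ht, hC⟩ := hω
    exact ⟨t, ht.trans hnm, hC⟩
  calc μ {ω | ∃ t : ℕ, 1 ≤ t ∧ z ≤ Z t ω ∧ ∑ i ∈ Finset.Icc 1 t, P i ω ≤ v}
      ≤ μ (⋃ n, A n) := measure_mono hsubset
    _ = ⨆ n, μ (A n) := hAmono.directed_le.measure_iUnion
    _ ≤ ENNReal.ofReal (1/C) := iSup_le hmax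
    _ ≤ ENNReal.ofReal (Real.exp (-z ^ 2 / (2 * (v + z)))) := by
        apply ENNReal.ofReal_le_ofReal
        rw [hC_def, one_div, ← Real.exp_neg]
        apply Real.exp_le_exp.2
        rw [neg_div]
        linarith [hkey]
end

section
/- For every ε, δ ∈ (0,1), running the SumApprox sampling process with threshold k = k_{ε,δ} = ⌈((2 + 4.4ε)/ε²)·ln(3/δ)⌉ yields an estimate Γ̂ = W/k satisfying Pr[|Γ̂ − Γ| ≥ εΓ] ≤ 2δ/3. -/
open MeasureTheory ProbabilityTheory Finset

/-- The set `{X 1, …, X (i-1)}` of distinct elements drawn strictly before draw `i`. -/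
def drawnSet {V : Type*} [DecidableEq V] {Ω : Type*}
    (X : ℕ → Ω → V) (i : ℕ) (ω : Ω) : Finset V :=
  (Finset.Icc 1 (i - 1)).image fun j => X j ω

/-- The number of repeats among the first `i` draws: `∑_{j=1}^i χ_j` where `χ_j` is the
indicator that `X j ∈ {X 1, …, X (j-1)}`. -/
def repeatCount {V : Type*} [DecidableEq V] {Ω : Type*}
    (X : ℕ → Ω → V) (i : ℕ) (ω : Ω) : ℕ :=
  ((Finset.Icc 1 i).filter fun j => X j ω ∈ drawnSet X j ω).card

/-- The stopping time `T = min {i ≥ 1 : ∑_{j=1}^i χ_j = k}` of the SumApprox process. -/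
noncomputable def stopTime {V : Type*} [DecidableEq V] {Ω : Type*}
    (X : ℕ → Ω → V) (k : ℕ) (ω : Ω) : ℕ :=
  sInf {i | 1 ≤ i ∧ repeatCount X i ω = k}

/-- `P i = ∑_{u ∈ {X 1, …, X (i-1)}} π u`, the `π`-mass of the elements drawn before
draw `i`. -/
def massBefore {V : Type*} [DecidableEq V] {Ω : Type*}
    (π : V → ℝ) (X : ℕ → Ω → V) (i : ℕ) (ω : Ω) : ℝ :=
  ∑ u ∈ drawnSet X i ω, π u

/-- `W = Γ * ∑_{i=1}^T P i`, the accumulated (unnormalized) mass of the SumApprox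
process with threshold `k`. -/
noncomputable def sumApproxW {V : Type*} [DecidableEq V] {Ω : Type*}
    (Γ : ℝ) (π : V → ℝ) (X : ℕ → Ω → V) (k : ℕ) (ω : Ω) : ℝ :=
  Γ * ∑ i ∈ Finset.Icc 1 (stopTime X k ω), massBefore π X i ω

section Det
variable {V : Type*} [DecidableEq V] {Ω Ω' : Type*}

lemma drawnSet_succ (X : ℕ → Ω → V) {i : ℕ} (hi : 1 ≤ i) (ω : Ω) :
    drawnSet X (i + 1) ω = insert (X i ω) (drawnSet X i ω) := by
  unfold drawnSet
  have h : Finset.Icc 1 (i + 1 - 1) = insert i (Finset.Icc 1 (i - 1)) := by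
    ext j; simp only [Finset.mem_Icc, Finset.mem_insert]; omega
  rw [h, Finset.image_insert]

lemma repeatCount_zero (X : ℕ → Ω → V) (ω : Ω) : repeatCount X 0 ω = 0 := by
  simp [repeatCount]

lemma repeatCount_succ (X : ℕ → Ω → V) (i : ℕ) (ω : Ω) :
    repeatCount X (i + 1) ω =
      repeatCount X i ω + (if X (i + 1) ω ∈ drawnSet X (i + 1) ω then 1 else 0) := by
  unfold repeatCount
  have h : Finset.Icc 1 (i + 1) = insert (i + 1) (Finset.Icc 1 i) := by
    ext j; simp only [Finset.mem_Icc, Finset.mem_insert]; omega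
  rw [h, Finset.filter_insert]
  split
  · rw [Finset.card_insert_of_notMem (by simp [Finset.mem_Icc])]
  · simp

lemma repeatCount_mono (X : ℕ → Ω → V) (ω : Ω) : Monotone (fun i => repeatCount X i ω) := by
  apply monotone_nat_of_le_succ
  intro i
  rw [repeatCount_succ]
  split <;> omega

lemma repeatCount_step (X : ℕ → Ω → V) (i : ℕ) (ω : Ω) :
    repeatCount X (i + 1) ω ≤ repeatCount X i ω + 1 := by
  rw [repeatCount_succ]; split <;> omega

lemma drawnSet_card_add (X : ℕ → Ω → V) (i : ℕ) (ω : Ω) :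
    (drawnSet X (i + 1) ω).card + repeatCount X i ω = i := by
  induction i with
  | zero => simp [drawnSet, repeatCount]; rfl
  | succ i ih =>
    rw [drawnSet_succ X (by omega) ω, repeatCount_succ]
    by_cases h : X (i + 1) ω ∈ drawnSet X (i + 1) ω
    · rw [if_pos h, Finset.insert_eq_self.2 h]; omega
    · rw [if_neg h, Finset.card_insert_of_notMem h]; omega

lemma le_card_add_repeatCount [Fintype V] (X : ℕ → Ω → V) (i : ℕ) (ω : Ω) :
    i ≤ Fintype.card V + repeatCount X i ω := by
  have h := drawnSet_card_add X i ω
  have h2 : (drawnSet X (i + 1) ω).card ≤ Fintype.card V := Finset.card_le_univ _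
  omega

lemma nat_ivt {f : ℕ → ℕ} (h0 : f 0 = 0) (hstep : ∀ i, f (i + 1) ≤ f i + 1) :
    ∀ m k, k ≤ f m → ∃ i, i ≤ m ∧ f i = k := by
  intro m
  induction m with
  | zero => intro k hk; exact ⟨0, le_refl 0, by omega⟩
  | succ m ih =>
    intro k hk
    by_cases h : k ≤ f m
    · obtain ⟨i, hi, hfi⟩ := ih k h
      exact ⟨i, by omega, hfi⟩
    · exact ⟨m + 1, le_refl _, by have := hstep m; omega⟩

lemma exists_repeatCount_eq [Fintype V] (X : ℕ → Ω → V) (ω : Ω) {k : ℕ} (hk : 1 ≤ k) :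
    ∃ i, 1 ≤ i ∧ i ≤ k + Fintype.card V ∧ repeatCount X i ω = k := by
  have hreach : k ≤ repeatCount X (k + Fintype.card V) ω := by
    have := le_card_add_repeatCount X (k + Fintype.card V) ω
    omega
  obtain ⟨i, hi, hfi⟩ := nat_ivt (f := fun i => repeatCount X i ω) (repeatCount_zero X ω) (fun i => repeatCount_step X i ω)
    (k + Fintype.card V) k hreach
  refine ⟨i, ?_, hi, hfi⟩
  rcases Nat.eq_zero_or_pos i with h | h
  · rw [h, repeatCount_zero] at hfi; omega
  · exact h

lemma stopTime_spec [Fintype V] (X : ℕ → Ω → V) (ω : Ω) {k : ℕ} (hk : 1 ≤ k) :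
    1 ≤ stopTime X k ω ∧ repeatCount X (stopTime X k ω) ω = k ∧
      stopTime X k ω ≤ k + Fintype.card V := by
  obtain ⟨i, hi1, hi2, hi3⟩ := exists_repeatCount_eq X ω hk
  have hne : {i | 1 ≤ i ∧ repeatCount X i ω = k}.Nonempty := ⟨i, hi1, hi3⟩
  have hmem := Nat.sInf_mem hne
  exact ⟨hmem.1, hmem.2, le_trans (Nat.sInf_le ⟨hi1, hi3⟩) hi2⟩

section Congr
variable {X : ℕ → Ω → V} {Y : ℕ → Ω' → V} {ω : Ω} {ω' : Ω'} {t : ℕ}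
  (h : ∀ j, 1 ≤ j → j ≤ t → X j ω = Y j ω')
include h

lemma drawnSet_congr : ∀ i, i ≤ t + 1 → drawnSet X i ω = drawnSet Y i ω' := by
  intro i hi
  unfold drawnSet
  apply Finset.image_congr
  intro j hj
  simp only [Finset.coe_Icc, Set.mem_Icc] at hj
  exact h j hj.1 (by omega)

lemma repeatCount_congr : ∀ i, i ≤ t → repeatCount X i ω = repeatCount Y i ω' := by
  intro i hi
  unfold repeatCount
  congr 1
  apply Finset.filter_congr
  intro j hj
  simp only [Finset.mem_Icc] at hj
  rw [h j hj.1 (by omega), drawnSet_congr h j (by omega)]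

lemma massBefore_congr (π : V → ℝ) : ∀ i, i ≤ t + 1 →
    massBefore π X i ω = massBefore π Y i ω' := by
  intro i hi
  unfold massBefore
  rw [drawnSet_congr h i hi]

lemma stopTime_le_trans [Fintype V] {k : ℕ} (hk : 1 ≤ k)
    (hle : stopTime X k ω ≤ t) : stopTime Y k ω' ≤ stopTime X k ω := by
  obtain ⟨h1, h2, _⟩ := stopTime_spec X ω hk
  exact Nat.sInf_le ⟨h1, by rw [← repeatCount_congr h _ hle]; exact h2⟩

end Congr

lemma stopTime_min_congr [Fintype V] {X : ℕ → Ω → V} {Y : ℕ → Ω' → V} {ω : Ω} {ω' : Ω'} {t : ℕ}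
    (h : ∀ j, 1 ≤ j → j ≤ t → X j ω = Y j ω') {k : ℕ} (hk : 1 ≤ k) :
    min (stopTime X k ω) t = min (stopTime Y k ω') t := by
  have h' : ∀ j, 1 ≤ j → j ≤ t → Y j ω' = X j ω := fun j h1 h2 => (h j h1 h2).symm
  by_cases hle : stopTime X k ω ≤ t
  · have h1 := stopTime_le_trans h hk hle
    have h2 := stopTime_le_trans h' hk (le_trans h1 hle)
    omega
  · by_cases hle' : stopTime Y k ω' ≤ t
    · have := stopTime_le_trans h' hk hle'
      omega
    · omega

lemma stopTime_congr [Fintype V] {X : ℕ → Ω → V} {Y : ℕ → Ω' → V} {ω : Ω} {ω' : Ω'} {t : ℕ}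
    (h : ∀ j, 1 ≤ j → j ≤ t → X j ω = Y j ω') {k : ℕ} (hk : 1 ≤ k)
    (hX : stopTime X k ω ≤ t) (hY : stopTime Y k ω' ≤ t) :
    stopTime X k ω = stopTime Y k ω' := by
  have := stopTime_min_congr h hk (t := t)
  omega

end Det

lemma one_sub_mul_exp_le (x : ℝ) : (1 - x) * Real.exp x ≤ 1 := by
  rcases le_or_gt x 1 with h | h
  · have h1 : 1 - x ≤ Real.exp (-x) := by
      have := Real.add_one_le_exp (-x); linarith
    calc (1 - x) * Real.exp x ≤ Real.exp (-x) * Real.exp x :=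
          mul_le_mul_of_nonneg_right h1 (Real.exp_pos x).le
      _ = 1 := by rw [← Real.exp_add]; simp
  · nlinarith [(Real.exp_pos x).le, Real.exp_pos x]

lemma log_le_pade {s : ℝ} (hs : 1 ≤ s) : Real.log s ≤ (s - s⁻¹) / 2 := by
  set f : ℝ → ℝ := fun s => (s - s⁻¹) / 2 - Real.log s with hf
  have key : MonotoneOn f (Set.Ici 1) := by
    apply monotoneOn_of_hasDerivWithinAt_nonneg (f' := fun x => (1 + (x ^ 2)⁻¹) / 2 - x⁻¹)
      (convex_Ici 1)
    · apply ContinuousOn.sub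
      · exact (continuousOn_id.sub (continuousOn_inv₀.mono (by
          intro x hx; simp only [Set.mem_Ici] at hx; simp only [Set.mem_compl_iff,
            Set.mem_singleton_iff]; intro h; rw [h] at hx; linarith))).div_const 2
      · exact Real.continuousOn_log.mono (by
          intro x hx; simp only [Set.mem_Ici] at hx; simp only [Set.mem_compl_iff,
            Set.mem_singleton_iff]; intro h; rw [h] at hx; linarith)
    · intro x hx
      rw [interior_Ici] at hx
      have hx0 : x ≠ 0 := by simp only [Set.mem_Ioi] at hx; intro h; rw [h] at hx; linarith
      have h1 : HasDerivAt f ((1 - -(x ^ 2)⁻¹) / 2 - x⁻¹) x := by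
        exact (((hasDerivAt_id x).sub (hasDerivAt_inv hx0)).div_const 2).sub
          (Real.hasDerivAt_log hx0)
      have : (1 - -(x ^ 2)⁻¹) / 2 - x⁻¹ = (1 + (x ^ 2)⁻¹) / 2 - x⁻¹ := by ring
      rw [this] at h1
      exact h1.hasDerivWithinAt
    · intro x hx
      rw [interior_Ici] at hx
      simp only [Set.mem_Ioi] at hx
      have hx0 : (0 : ℝ) < x := by linarith
      have hinv : (x ^ 2)⁻¹ = x⁻¹ * x⁻¹ := by rw [sq, mul_inv]
      have hmul : x * x⁻¹ = 1 := mul_inv_cancel₀ (ne_of_gt hx0)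
      nlinarith [sq_nonneg (1 - x⁻¹)]
  have h1 : f 1 ≤ f s := key (by simp) hs hs
  have : f 1 = 0 := by simp [hf]
  rw [this] at h1
  simp only [hf] at h1
  linarith

lemma neg_log_ge {s : ℝ} (hs0 : 0 < s) (hs1 : s ≤ 1) :
    (1 - s) + (1 - s) ^ 2 / 2 ≤ -Real.log s := by
  set g : ℝ → ℝ := fun s => -Real.log s - (1 - s) - (1 - s) ^ 2 / 2 with hg
  have key : AntitoneOn g (Set.Ioc 0 1) := by
    apply antitoneOn_of_deriv_nonpos (convex_Ioc 0 1)
    · apply ContinuousOn.sub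
      apply ContinuousOn.sub
      · exact (Real.continuousOn_log.mono (by
          intro x hx; simp only [Set.mem_Ioc] at hx; simp only [Set.mem_compl_iff,
            Set.mem_singleton_iff]; intro h; rw [h] at hx; linarith [hx.1])).neg
      · fun_prop
      · fun_prop
    · rw [interior_Ioc]
      intro x hx
      have hx0 : x ≠ 0 := ne_of_gt hx.1
      exact ((((Real.hasDerivAt_log hx0).neg).sub (((hasDerivAt_id x).const_sub 1))).sub
        ((((hasDerivAt_id x).const_sub 1).pow 2).div_const 2)).differentiableAt.differentiableWithinAt
    · rw [interior_Ioc]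
      intro x hx
      have hx0 : x ≠ 0 := ne_of_gt hx.1
      have h1 : HasDerivAt g (-x⁻¹ - (-1) - ((2 : ℕ) * (1 - x) ^ (2 - 1) * (-1)) / 2) x :=
        (((Real.hasDerivAt_log hx0).neg).sub (((hasDerivAt_id x).const_sub 1))).sub
          ((((hasDerivAt_id x).const_sub 1).pow 2).div_const 2)
      rw [h1.deriv]
      have hmul : x * x⁻¹ = 1 := mul_inv_cancel₀ hx0
      have hx1 : x < 1 := hx.2
      have hxpos : (0 : ℝ) < x := hx.1
      nlinarith [sq_nonneg (1 - x), mul_pos hxpos (inv_pos.2 hxpos)]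
  have h1 : g 1 ≤ g s := key ⟨hs0, hs1⟩ (by norm_num) hs1
  have : g 1 = 0 := by simp [hg]
  rw [this] at h1
  simp only [hg] at h1
  linarith

lemma upper_rate {ε δ : ℝ} {k : ℕ} (hε0 : 0 < ε) (hε1 : ε < 1) (hδ0 : 0 < δ) (hδ1 : δ < 1)
    (hk : (2 + 4.4 * ε) / ε ^ 2 * Real.log (3 / δ) ≤ (k : ℝ)) :
    Real.exp (-((k : ℝ) * (ε - Real.log (1 + ε)))) ≤ δ / 3 := by
  have hL : 0 < Real.log (3 / δ) := Real.log_pos (by rw [lt_div_iff₀ hδ0]; linarith)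
  set L := Real.log (3 / δ) with hLdef
  have hlog : Real.log (1 + ε) ≤ ((1 + ε) - (1 + ε)⁻¹) / 2 := log_le_pade (by linarith)
  have hc : ε ^ 2 / (2 * (1 + ε)) ≤ ε - Real.log (1 + ε) := by
    have h1 : (1 + ε) - (1 + ε)⁻¹ = (2 * ε + ε ^ 2) / (1 + ε) := by
      field_simp; ring
    rw [h1] at hlog
    have h2 : ε - (2 * ε + ε ^ 2) / (1 + ε) / 2 = ε ^ 2 / (2 * (1 + ε)) := by
      field_simp; ring
    linarith
  have hkc : L ≤ (k : ℝ) * (ε - Real.log (1 + ε)) := by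
    have h3 : L * ((2 + 4.4 * ε) / (2 * (1 + ε))) =
        ((2 + 4.4 * ε) / ε ^ 2 * L) * (ε ^ 2 / (2 * (1 + ε))) := by
      field_simp
    have h4 : L ≤ L * ((2 + 4.4 * ε) / (2 * (1 + ε))) := by
      nth_rewrite 1 [← mul_one L]
      apply mul_le_mul_of_nonneg_left _ hL.le
      rw [le_div_iff₀ (by linarith)]
      linarith
    have h5 : ((2 + 4.4 * ε) / ε ^ 2 * L) * (ε ^ 2 / (2 * (1 + ε))) ≤
        (k : ℝ) * (ε ^ 2 / (2 * (1 + ε))) := by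
      apply mul_le_mul_of_nonneg_right hk
      positivity
    have h6 : (k : ℝ) * (ε ^ 2 / (2 * (1 + ε))) ≤ (k : ℝ) * (ε - Real.log (1 + ε)) := by
      apply mul_le_mul_of_nonneg_left hc (Nat.cast_nonneg k)
    linarith
  calc Real.exp (-((k : ℝ) * (ε - Real.log (1 + ε)))) ≤ Real.exp (-L) :=
        Real.exp_le_exp.2 (by linarith)
    _ = δ / 3 := by
        rw [hLdef, ← Real.log_inv, Real.exp_log (by positivity)]
        rw [inv_div]

lemma lower_rate {ε δ : ℝ} {k : ℕ} (hε0 : 0 < ε) (hε1 : ε < 1) (hδ0 : 0 < δ) (hδ1 : δ < 1)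
    (hk : (2 + 4.4 * ε) / ε ^ 2 * Real.log (3 / δ) ≤ (k : ℝ)) :
    Real.exp (-((k : ℝ) * (-Real.log (1 - ε) - ε))) ≤ δ / 3 := by
  have hL : 0 < Real.log (3 / δ) := Real.log_pos (by rw [lt_div_iff₀ hδ0]; linarith)
  set L := Real.log (3 / δ) with hLdef
  have hlog : (1 - (1 - ε)) + (1 - (1 - ε)) ^ 2 / 2 ≤ -Real.log (1 - ε) :=
    neg_log_ge (by linarith) (by linarith)
  have hc : ε ^ 2 / 2 ≤ -Real.log (1 - ε) - ε := by
    have : (1 - (1 - ε)) = ε := by ring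
    rw [this] at hlog
    linarith
  have hkc : L ≤ (k : ℝ) * (-Real.log (1 - ε) - ε) := by
    have h3 : L ≤ ((2 + 4.4 * ε) / ε ^ 2 * L) * (ε ^ 2 / 2) := by
      have heq : ((2 + 4.4 * ε) / ε ^ 2 * L) * (ε ^ 2 / 2) = L * ((2 + 4.4 * ε) / 2) := by
        field_simp
      rw [heq]
      nth_rewrite 1 [← mul_one L]
      apply mul_le_mul_of_nonneg_left _ hL.le
      linarith
    have h5 : ((2 + 4.4 * ε) / ε ^ 2 * L) * (ε ^ 2 / 2) ≤ (k : ℝ) * (ε ^ 2 / 2) :=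
      mul_le_mul_of_nonneg_right hk (by positivity)
    have h6 : (k : ℝ) * (ε ^ 2 / 2) ≤ (k : ℝ) * (-Real.log (1 - ε) - ε) :=
      mul_le_mul_of_nonneg_left hc (Nat.cast_nonneg k)
    linarith
  calc Real.exp (-((k : ℝ) * (-Real.log (1 - ε) - ε))) ≤ Real.exp (-L) :=
        Real.exp_le_exp.2 (by linarith)
    _ = δ / 3 := by
        rw [hLdef, ← Real.log_inv, Real.exp_log (by positivity)]
        rw [inv_div]

section Core
variable {V : Type*} [Fintype V] [DecidableEq V] [Nonempty V]

noncomputable def extFn {V : Type*} [Nonempty V] (n : ℕ) (v : Fin n → V) : ℕ → V :=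
  fun j => if h : j - 1 < n then v ⟨j - 1, h⟩ else Classical.arbitrary V

abbrev evp {V : Type*} : ℕ → (ℕ → V) → V := fun j x => x j

noncomputable def Zproc (π : V → ℝ) (α β : ℝ) (k t : ℕ) (x : ℕ → V) : ℝ :=
  Real.exp (α * (repeatCount evp (min (stopTime evp k x) t) x : ℝ)
    + β * ∑ i ∈ Finset.Icc 1 (min (stopTime evp k x) t), massBefore π evp i x)

noncomputable def STfun (π : V → ℝ) (k : ℕ) (x : ℕ → V) : ℝ :=
  ∑ i ∈ Finset.Icc 1 (stopTime evp k x), massBefore π evp i x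

def snocEquiv (V : Type*) (t : ℕ) : ((Fin t → V) × V) ≃ (Fin (t + 1) → V) where
  toFun p := Fin.snoc p.1 p.2
  invFun f := (Fin.init f, f (Fin.last t))
  left_inv p := by
    ext <;> simp [Fin.init_snoc, Fin.snoc_last]
  right_inv f := Fin.snoc_init_self f

lemma extFn_apply {V : Type*} [Nonempty V] (n : ℕ) (v : Fin n → V) (j : ℕ)
    (h2 : j - 1 < n) : extFn n v j = v ⟨j - 1, h2⟩ := dif_pos h2

lemma extFn_snoc_agree {V : Type*} [Nonempty V] (t : ℕ) (w : Fin t → V) (u : V) :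
    ∀ j, 1 ≤ j → j ≤ t → evp j (extFn (t + 1) (Fin.snoc w u)) = evp j (extFn t w) := by
  intro j h1 h2
  have ha : j - 1 < t := by omega
  have hb : j - 1 < t + 1 := by omega
  show extFn (t + 1) (Fin.snoc w u) j = extFn t w j
  rw [extFn_apply _ _ _ ha, extFn_apply _ _ _ hb]
  have hcast : (⟨j - 1, hb⟩ : Fin (t + 1)) = Fin.castSucc ⟨j - 1, ha⟩ := rfl
  rw [hcast, Fin.snoc_castSucc]

lemma extFn_snoc_last {V : Type*} [Nonempty V] (t : ℕ) (w : Fin t → V) (u : V) :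
    extFn (t + 1) (Fin.snoc w u) (t + 1) = u := by
  have hb : t + 1 - 1 < t + 1 := by omega
  rw [extFn_apply _ _ _ hb]
  have hcast : (⟨t + 1 - 1, hb⟩ : Fin (t + 1)) = Fin.last t := by
    ext; simp
  rw [hcast, Fin.snoc_last]

lemma core_le_one (π : V → ℝ) (hπ0 : ∀ u, 0 ≤ π u) (hπ1 : ∑ u, π u = 1)
    (α β : ℝ)
    (hαβ : ∀ P : ℝ, 0 ≤ P → P ≤ 1 → (1 - P + P * Real.exp α) * Real.exp (β * P) ≤ 1)
    (k : ℕ) (hk1 : 1 ≤ k) :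
    ∀ t, ∑ v : Fin t → V, (∏ i, π (v i)) * Zproc π α β k t (extFn t v) ≤ 1 := by
  intro t
  induction t with
  | zero =>
    have hterm : ∀ v : Fin 0 → V,
        (∏ i, π (v i)) * Zproc π α β k 0 (extFn 0 v) = 1 := by
      intro v
      have h1 : (∏ i, π (v i)) = 1 := by simp
      have h2 : Zproc π α β k 0 (extFn 0 v) = 1 := by
        unfold Zproc
        rw [Nat.min_zero]
        simp [repeatCount_zero]
      rw [h1, h2, one_mul]
    rw [Finset.sum_congr rfl (fun v _ => hterm v), Finset.sum_const, Finset.card_univ]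
    simp
  | succ t ih =>
    have hsum : ∑ v : Fin (t + 1) → V, (∏ i, π (v i)) * Zproc π α β k (t + 1) (extFn (t + 1) v)
        = ∑ w : Fin t → V, ∑ u : V,
            (∏ i, π ((Fin.snoc w u : Fin (t + 1) → V) i)) * Zproc π α β k (t + 1) (extFn (t + 1) (Fin.snoc w u)) := by
      rw [← Equiv.sum_comp (snocEquiv V t)
        (fun v => (∏ i, π (v i)) * Zproc π α β k (t + 1) (extFn (t + 1) v))]
      rw [Fintype.sum_prod_type]
      rfl
    rw [hsum]
    have hkey : ∀ w : Fin t → V,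
        ∑ u : V, (∏ i, π ((Fin.snoc w u : Fin (t + 1) → V) i)) * Zproc π α β k (t + 1) (extFn (t + 1) (Fin.snoc w u))
          ≤ (∏ i, π (w i)) * Zproc π α β k t (extFn t w) := by
      intro w
      set x := extFn t w with hx
      have hprodsplit : ∀ u : V, (∏ i, π ((Fin.snoc w u : Fin (t + 1) → V) i)) = (∏ i, π (w i)) * π u := by
        intro u
        rw [Fin.prod_univ_castSucc]
        simp [Fin.snoc_castSucc, Fin.snoc_last]
      have hpw0 : 0 ≤ ∏ i, π (w i) := Finset.prod_nonneg fun i _ => hπ0 _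
      by_cases hT : stopTime evp k x ≤ t
      · -- already stopped: Z is frozen
        have hZeq : ∀ u : V,
            Zproc π α β k (t + 1) (extFn (t + 1) (Fin.snoc w u)) = Zproc π α β k t x := by
          intro u
          set x' := extFn (t + 1) (Fin.snoc w u) with hx'
          have hag : ∀ j, 1 ≤ j → j ≤ t → evp j x' = evp j x := extFn_snoc_agree t w u
          have hag' : ∀ j, 1 ≤ j → j ≤ t → evp j x = evp j x' :=
            fun j h1 h2 => (hag j h1 h2).symm
          have hT' : stopTime evp k x' ≤ stopTime evp k x := stopTime_le_trans hag' hk1 hT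
          have hT'' : stopTime evp k x ≤ stopTime evp k x' :=
            stopTime_le_trans hag hk1 (le_trans hT' hT)
          have hTeq : stopTime evp k x' = stopTime evp k x := le_antisymm hT' hT''
          unfold Zproc
          rw [hTeq]
          have hmin1 : min (stopTime evp k x) (t + 1) = stopTime evp k x := by omega
          have hmin2 : min (stopTime evp k x) t = stopTime evp k x := by omega
          rw [hmin1, hmin2]
          rw [repeatCount_congr hag _ hT]
          have hms : ∑ i ∈ Finset.Icc 1 (stopTime evp k x), massBefore π evp i x'
              = ∑ i ∈ Finset.Icc 1 (stopTime evp k x), massBefore π evp i x := by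
            apply Finset.sum_congr rfl
            intro i hi
            simp only [Finset.mem_Icc] at hi
            exact massBefore_congr hag π i (by omega)
          rw [hms]
        apply le_of_eq
        calc ∑ u : V, (∏ i, π ((Fin.snoc w u : Fin (t + 1) → V) i)) *
              Zproc π α β k (t + 1) (extFn (t + 1) (Fin.snoc w u))
            = ∑ u : V, π u * ((∏ i, π (w i)) * Zproc π α β k t x) := by
              apply Finset.sum_congr rfl
              intro u _
              rw [hprodsplit u, hZeq u]; ring
          _ = (∏ i, π (w i)) * Zproc π α β k t x := by
              rw [← Finset.sum_mul, hπ1, one_mul]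
      · -- not yet stopped: one more step of the supermartingale
        push_neg at hT
        set D := drawnSet evp (t + 1) x with hD
        set P := massBefore π evp (t + 1) x with hP
        have hP0 : 0 ≤ P := Finset.sum_nonneg fun u _ => hπ0 u
        have hP1 : P ≤ 1 := by
          rw [hP]
          unfold massBefore
          rw [← hπ1]
          exact Finset.sum_le_sum_of_subset_of_nonneg (Finset.subset_univ _)
            (fun u _ _ => hπ0 u)
        have hmin : min (stopTime evp k x) t = t := min_eq_right (le_of_lt hT)
        have hZt : Zproc π α β k t x =
            Real.exp (α * (repeatCount evp t x : ℝ)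
              + β * ∑ i ∈ Finset.Icc 1 t, massBefore π evp i x) := by
          unfold Zproc; rw [hmin]
        have hZstep : ∀ u : V,
            Zproc π α β k (t + 1) (extFn (t + 1) (Fin.snoc w u)) =
              Zproc π α β k t x *
                Real.exp (α * (if u ∈ D then (1 : ℝ) else 0) + β * P) := by
          intro u
          set x' := extFn (t + 1) (Fin.snoc w u) with hx'
          have hag : ∀ j, 1 ≤ j → j ≤ t → evp j x' = evp j x := extFn_snoc_agree t w u
          have hT'x : t < stopTime evp k x' := by
            by_contra hcon
            push_neg at hcon
            have := stopTime_le_trans hag hk1 hcon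
            omega
          have hmin' : min (stopTime evp k x') (t + 1) = t + 1 := by omega
          unfold Zproc
          rw [hmin']
          rw [repeatCount_succ]
          have hrc : repeatCount evp t x' = repeatCount evp t x := repeatCount_congr hag _ le_rfl
          have hdrawn : drawnSet evp (t + 1) x' = D := drawnSet_congr hag (t + 1) le_rfl
          have hlastu : evp (t + 1) x' = u := extFn_snoc_last t w u
          have hsumsplit : ∑ i ∈ Finset.Icc 1 (t + 1), massBefore π evp i x'
              = (∑ i ∈ Finset.Icc 1 t, massBefore π evp i x) + P := by
            rw [Finset.sum_Icc_succ_top (by omega : 1 ≤ t + 1)]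
            congr 1
            · apply Finset.sum_congr rfl
              intro i hi
              simp only [Finset.mem_Icc] at hi
              exact massBefore_congr hag π i (by omega)
            · exact massBefore_congr hag π (t + 1) le_rfl
          rw [hrc, hdrawn, hlastu, hsumsplit, hmin, ← Real.exp_add]
          congr 1
          push_cast
          split <;> ring
        have hfactor : ∑ u : V, π u * Real.exp (α * (if u ∈ D then (1 : ℝ) else 0) + β * P)
            ≤ 1 := by
          have hsplit : ∑ u : V, π u * Real.exp (α * (if u ∈ D then (1 : ℝ) else 0) + β * P)
              = (P * Real.exp α + (1 - P)) * Real.exp (β * P) := by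
            have h1 : ∀ u : V, π u * Real.exp (α * (if u ∈ D then (1 : ℝ) else 0) + β * P)
                = (π u * Real.exp (α * (if u ∈ D then (1 : ℝ) else 0))) * Real.exp (β * P) := by
              intro u; rw [Real.exp_add]; ring
            rw [Finset.sum_congr rfl (fun u _ => h1 u), ← Finset.sum_mul]
            congr 1
            rw [← Finset.sum_filter_add_sum_filter_not Finset.univ (· ∈ D)]
            have hfil : Finset.univ.filter (· ∈ D) = D := by
              ext u; simp
            have h2 : ∑ u ∈ Finset.univ.filter (· ∈ D),
                π u * Real.exp (α * (if u ∈ D then (1 : ℝ) else 0)) = P * Real.exp α := by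
              rw [hfil]
              rw [hP]
              unfold massBefore
              rw [Finset.sum_mul]
              apply Finset.sum_congr rfl
              intro u hu
              rw [if_pos hu, mul_one]
            have h3 : ∑ u ∈ Finset.univ.filter (¬ · ∈ D),
                π u * Real.exp (α * (if u ∈ D then (1 : ℝ) else 0)) = 1 - P := by
              have h4 : ∀ u ∈ Finset.univ.filter (¬ · ∈ D),
                  π u * Real.exp (α * (if u ∈ D then (1 : ℝ) else 0)) = π u := by
                intro u hu
                simp only [Finset.mem_filter] at hu
                rw [if_neg hu.2, mul_zero, Real.exp_zero, mul_one]
              rw [Finset.sum_congr rfl h4]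
              have h5 : ∑ u ∈ Finset.univ.filter (· ∈ D), π u
                  + ∑ u ∈ Finset.univ.filter (¬ · ∈ D), π u = 1 := by
                rw [Finset.sum_filter_add_sum_filter_not, hπ1]
              have h6 : ∑ u ∈ Finset.univ.filter (· ∈ D), π u = P := by
                rw [hfil, hP]; rfl
              linarith
            rw [h2, h3]
          rw [hsplit]
          have := hαβ P hP0 hP1
          linarith [hαβ P hP0 hP1]
        calc ∑ u : V, (∏ i, π ((Fin.snoc w u : Fin (t + 1) → V) i)) *
              Zproc π α β k (t + 1) (extFn (t + 1) (Fin.snoc w u))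
            = ((∏ i, π (w i)) * Zproc π α β k t x) *
                ∑ u : V, π u * Real.exp (α * (if u ∈ D then (1 : ℝ) else 0) + β * P) := by
              rw [Finset.mul_sum]
              apply Finset.sum_congr rfl
              intro u _
              rw [hprodsplit u, hZstep u]; ring
          _ ≤ ((∏ i, π (w i)) * Zproc π α β k t x) * 1 := by
              apply mul_le_mul_of_nonneg_left hfactor
              exact mul_nonneg hpw0 (Real.exp_pos _).le
          _ = (∏ i, π (w i)) * Zproc π α β k t x := mul_one _
    calc ∑ w : Fin t → V, ∑ u : V,
          (∏ i, π ((Fin.snoc w u : Fin (t + 1) → V) i)) * Zproc π α β k (t + 1) (extFn (t + 1) (Fin.snoc w u))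
        ≤ ∑ w : Fin t → V, (∏ i, π (w i)) * Zproc π α β k t (extFn t w) :=
          Finset.sum_le_sum fun w _ => hkey w
      _ ≤ 1 := ih

lemma core_markov (π : V → ℝ) (hπ0 : ∀ u, 0 ≤ π u) (hπ1 : ∑ u, π u = 1)
    (α β : ℝ)
    (hαβ : ∀ P : ℝ, 0 ≤ P → P ≤ 1 → (1 - P + P * Real.exp α) * Real.exp (β * P) ≤ 1)
    (k : ℕ) (hk1 : 1 ≤ k) (n : ℕ) (a : ℝ) (ha : 0 < a)
    (E : Finset (Fin n → V)) (hE : ∀ v ∈ E, a ≤ Zproc π α β k n (extFn n v)) :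
    ∑ v ∈ E, (∏ i, π (v i)) ≤ a⁻¹ := by
  have h1 : a * ∑ v ∈ E, (∏ i, π (v i)) ≤ 1 := by
    calc a * ∑ v ∈ E, (∏ i, π (v i)) = ∑ v ∈ E, a * (∏ i, π (v i)) := Finset.mul_sum _ _ _
      _ ≤ ∑ v ∈ E, (∏ i, π (v i)) * Zproc π α β k n (extFn n v) := by
          apply Finset.sum_le_sum
          intro v hv
          have hp0 : 0 ≤ ∏ i, π (v i) := Finset.prod_nonneg fun i _ => hπ0 _
          rw [mul_comm]
          exact mul_le_mul_of_nonneg_left (hE v hv) hp0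
      _ ≤ ∑ v : Fin n → V, (∏ i, π (v i)) * Zproc π α β k n (extFn n v) := by
          apply Finset.sum_le_sum_of_subset_of_nonneg (Finset.subset_univ E)
          intro v _ _
          exact mul_nonneg (Finset.prod_nonneg fun i _ => hπ0 _) (Real.exp_pos _).le
      _ ≤ 1 := core_le_one π hπ0 hπ1 α β hαβ k hk1 n
  have h2 : a * ∑ v ∈ E, (∏ i, π (v i)) ≤ a * a⁻¹ := by
    rw [mul_inv_cancel₀ (ne_of_gt ha)]; exact h1
  exact le_of_mul_le_mul_left h2 ha

lemma Zproc_at_horizon (π : V → ℝ) (α β : ℝ) (k : ℕ) (hk1 : 1 ≤ k) (x : ℕ → V) :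
    Zproc π α β k (k + Fintype.card V) x = Real.exp (α * (k : ℝ) + β * STfun π k x) := by
  obtain ⟨h1, h2, h3⟩ := stopTime_spec evp x hk1
  unfold Zproc STfun
  rw [min_eq_left h3, h2]
end Core

section Tails
variable {V : Type*} [Fintype V] [DecidableEq V] [Nonempty V]

lemma tail_upper (π : V → ℝ) (hπ0 : ∀ u, 0 ≤ π u) (hπ1 : ∑ u, π u = 1)
    {ε : ℝ} (hε0 : 0 < ε) (hε1 : ε < 1) (k : ℕ) (hk1 : 1 ≤ k)
    (n : ℕ) (hn : n = k + Fintype.card V)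
    (E : Finset (Fin n → V))
    (hE : ∀ v ∈ E, (1 + ε) * k ≤ STfun π k (extFn n v)) :
    ∑ v ∈ E, (∏ i, π (v i)) ≤ Real.exp (-((k : ℝ) * (ε - Real.log (1 + ε)))) := by
  subst hn
  set α := -Real.log (1 + ε) with hα
  set β := ε / (1 + ε) with hβ
  have hexpα : Real.exp α = (1 + ε)⁻¹ := by
    rw [hα, Real.exp_neg, Real.exp_log (by linarith)]
  have hαβ : ∀ P : ℝ, 0 ≤ P → P ≤ 1 → (1 - P + P * Real.exp α) * Real.exp (β * P) ≤ 1 := by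
    intro P hP0 hP1
    have h1 : 1 - P + P * Real.exp α = 1 - β * P := by
      rw [hexpα, hβ]; field_simp; ring
    rw [h1]
    exact one_sub_mul_exp_le (β * P)
  have ha : (0 : ℝ) < Real.exp ((k : ℝ) * (ε - Real.log (1 + ε))) := Real.exp_pos _
  have hmark := core_markov π hπ0 hπ1 α β hαβ k hk1 (k + Fintype.card V)
    (Real.exp ((k : ℝ) * (ε - Real.log (1 + ε)))) ha E ?_
  · rwa [← Real.exp_neg] at hmark
  · intro v hv
    rw [Zproc_at_horizon π α β k hk1]
    apply Real.exp_le_exp.2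
    have hβ0 : 0 ≤ β := div_nonneg hε0.le (by linarith)
    have h2 : β * ((1 + ε) * k) ≤ β * STfun π k (extFn (k + Fintype.card V) v) :=
      mul_le_mul_of_nonneg_left (hE v hv) hβ0
    have h3 : (k : ℝ) * (ε - Real.log (1 + ε)) = α * k + β * ((1 + ε) * k) := by
      rw [hα, hβ]; field_simp; ring
    linarith

lemma tail_lower (π : V → ℝ) (hπ0 : ∀ u, 0 ≤ π u) (hπ1 : ∑ u, π u = 1)
    {ε : ℝ} (hε0 : 0 < ε) (hε1 : ε < 1) (k : ℕ) (hk1 : 1 ≤ k)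
    (n : ℕ) (hn : n = k + Fintype.card V)
    (E : Finset (Fin n → V))
    (hE : ∀ v ∈ E, STfun π k (extFn n v) ≤ (1 - ε) * k) :
    ∑ v ∈ E, (∏ i, π (v i)) ≤ Real.exp (-((k : ℝ) * (-Real.log (1 - ε) - ε))) := by
  subst hn
  set α := -Real.log (1 - ε) with hα
  set β := -(ε / (1 - ε)) with hβ
  have hne1 : (1 : ℝ) - ε ≠ 0 := by linarith
  have hexpα : Real.exp α = (1 - ε)⁻¹ := by
    rw [hα, Real.exp_neg, Real.exp_log (by linarith)]
  have hαβ : ∀ P : ℝ, 0 ≤ P → P ≤ 1 → (1 - P + P * Real.exp α) * Real.exp (β * P) ≤ 1 := by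
    intro P hP0 hP1
    have h1 : 1 - P + P * Real.exp α = 1 - β * P := by
      rw [hexpα, hβ]; field_simp [hne1]; ring
    rw [h1]
    exact one_sub_mul_exp_le (β * P)
  have ha : (0 : ℝ) < Real.exp ((k : ℝ) * (-Real.log (1 - ε) - ε)) := Real.exp_pos _
  have hmark := core_markov π hπ0 hπ1 α β hαβ k hk1 (k + Fintype.card V)
    (Real.exp ((k : ℝ) * (-Real.log (1 - ε) - ε))) ha E ?_
  · rwa [← Real.exp_neg] at hmark
  · intro v hv
    rw [Zproc_at_horizon π α β k hk1]
    apply Real.exp_le_exp.2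
    have hβ0 : β ≤ 0 := by
      rw [hβ]
      have : 0 ≤ ε / (1 - ε) := div_nonneg hε0.le (by linarith)
      linarith
    have h2 : β * ((1 - ε) * k) ≤ β * STfun π k (extFn (k + Fintype.card V) v) :=
      mul_le_mul_of_nonpos_left (hE v hv) hβ0
    have h3 : (k : ℝ) * (-Real.log (1 - ε) - ε) = α * k + β * ((1 - ε) * k) := by
      rw [hα, hβ]; field_simp [hne1]; ring
    linarith

lemma prod_Icc_extFn (π : V → ℝ) (n : ℕ) (v : Fin n → V) :
    ∏ j ∈ Finset.Icc 1 n, π (extFn n v j) = ∏ i : Fin n, π (v i) := by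
  refine Finset.prod_bij' (i := fun (j : ℕ) (hj : j ∈ Finset.Icc 1 n) =>
      (⟨j - 1, by simp only [Finset.mem_Icc] at hj; omega⟩ : Fin n))
    (j := fun (i : Fin n) _ => (i : ℕ) + 1)
    (hi := fun a ha => Finset.mem_univ _)
    (hj := fun b _ => by simp only [Finset.mem_Icc]; have := b.isLt; omega)
    (left_inv := fun a ha => by
      simp only [Finset.mem_Icc] at ha
      show a - 1 + 1 = a
      omega)
    (right_inv := fun b _ => by
      apply Fin.ext
      show (b : ℕ) + 1 - 1 = (b : ℕ)
      omega)
    (h := fun a ha => by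
      simp only [Finset.mem_Icc] at ha
      rw [extFn_apply _ _ _ (by omega : a - 1 < n)])
end Tails

/-- Accuracy of SumApprox (Theorem `thm:sumest_approx`): with i.i.d. draws from
`π = γ / Γ` and threshold `k = ⌈((2+4.4ε)/ε²)·ln(3/δ)⌉`, the estimate `Γ̂ = W/k`
satisfies `Pr[|Γ̂ - Γ| ≥ εΓ] ≤ 2δ/3`. -/
theorem sumApprox_accuracy
    {V : Type*} [Fintype V] [DecidableEq V] [MeasurableSpace V] [MeasurableSingletonClass V]
    {Ω : Type*} {mΩ : MeasurableSpace Ω} {μ : Measure Ω} [IsProbabilityMeasure μ]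
    (γ : V → ℝ) (hγ0 : ∀ u, 0 ≤ γ u) (hγpos : 0 < ∑ u, γ u)
    (π : V → ℝ) (hπ : ∀ u, π u = γ u / ∑ u', γ u')
    (X : ℕ → Ω → V) (hXmeas : ∀ i, Measurable (X i))
    (hindep : iIndepFun X μ)
    (hlaw : ∀ i : ℕ, 1 ≤ i → ∀ u : V, μ (X i ⁻¹' {u}) = ENNReal.ofReal (π u))
    (ε δ : ℝ) (hε : ε ∈ Set.Ioo (0 : ℝ) 1) (hδ : δ ∈ Set.Ioo (0 : ℝ) 1)
    (k : ℕ) (hk : k = ⌈(2 + 4.4 * ε) / ε ^ 2 * Real.log (3 / δ)⌉₊) :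
    μ {ω | ε * ∑ u, γ u ≤
        |sumApproxW (∑ u, γ u) π X k ω / k - ∑ u, γ u|}
      ≤ ENNReal.ofReal (2 * δ / 3) := by
  classical
  obtain ⟨hε0, hε1⟩ := hε
  obtain ⟨hδ0, hδ1⟩ := hδ
  have hne : Nonempty V := by
    by_contra h
    rw [not_nonempty_iff] at h
    have hzero : (∑ u, γ u) = 0 := by rw [Finset.univ_eq_empty, Finset.sum_empty]
    linarith
  have hπ0 : ∀ u, 0 ≤ π u := fun u => by
    rw [hπ u]; exact div_nonneg (hγ0 u) (le_of_lt hγpos)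
  have hπ1 : ∑ u, π u = 1 := by
    rw [Finset.sum_congr rfl fun u _ => hπ u, ← Finset.sum_div]
    exact div_self (ne_of_gt hγpos)
  have hL : 0 < Real.log (3 / δ) := Real.log_pos (by rw [lt_div_iff₀ hδ0]; linarith)
  have harg : 0 < (2 + 4.4 * ε) / ε ^ 2 * Real.log (3 / δ) :=
    mul_pos (div_pos (by linarith) (by positivity)) hL
  have hk1 : 1 ≤ k := by
    rw [hk]
    exact Nat.ceil_pos.2 harg
  have hkreal : (2 + 4.4 * ε) / ε ^ 2 * Real.log (3 / δ) ≤ (k : ℝ) := by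
    rw [hk]; exact Nat.le_ceil _
  have hkpos : (0 : ℝ) < (k : ℝ) := by
    have : 0 < k := hk1
    exact_mod_cast this
  have hk0 : (k : ℝ) ≠ 0 := ne_of_gt hkpos
  have hev : ∀ S : ℝ,
      (ε * ∑ u, γ u ≤ |(∑ u, γ u) * S / (k : ℝ) - ∑ u, γ u|) ↔ ε * k ≤ |S - k| := by
    intro S
    have h1 : (∑ u, γ u) * S / (k : ℝ) - (∑ u, γ u) = ((∑ u, γ u) / k) * (S - k) := by
      field_simp
    have h2 : ε * (∑ u, γ u) = ((∑ u, γ u) / k) * (ε * k) := by field_simp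
    rw [h1, abs_mul, abs_of_pos (div_pos hγpos hkpos)]
    constructor
    · intro h
      rw [h2] at h
      exact le_of_mul_le_mul_left h (div_pos hγpos hkpos)
    · intro h
      rw [h2]
      exact mul_le_mul_of_nonneg_left h (le_of_lt (div_pos hγpos hkpos))
  set n := k + Fintype.card V with hn
  let tup : Ω → (Fin n → V) := fun ω i => X ((i : ℕ) + 1) ω
  have hagree : ∀ ω : Ω, ∀ j, 1 ≤ j → j ≤ n → X j ω = evp j (extFn n (tup ω)) := by
    intro ω j h1 h2
    have hj : j - 1 < n := by omega
    show X j ω = extFn n (tup ω) j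
    rw [extFn_apply _ _ _ hj]
    show X j ω = X ((j - 1) + 1) ω
    congr 1
    omega
  have hWeq : ∀ ω : Ω, sumApproxW (∑ u, γ u) π X k ω
      = (∑ u, γ u) * STfun π k (extFn n (tup ω)) := by
    intro ω
    have hTX : stopTime X k ω ≤ n := by
      have := (stopTime_spec X ω hk1).2.2
      omega
    have hTY : stopTime evp k (extFn n (tup ω)) ≤ n := by
      have := (stopTime_spec evp (extFn n (tup ω)) hk1).2.2
      omega
    have hTeq : stopTime X k ω = stopTime evp k (extFn n (tup ω)) :=
      stopTime_congr (hagree ω) hk1 hTX hTY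
    unfold sumApproxW STfun
    rw [hTeq]
    congr 1
    apply Finset.sum_congr rfl
    intro i hi
    simp only [Finset.mem_Icc] at hi
    exact massBefore_congr (hagree ω) π i (by omega)
  let B : Finset (Fin n → V) := Finset.univ.filter
    (fun v => ε * (∑ u, γ u) ≤ |(∑ u, γ u) * STfun π k (extFn n v) / (k : ℝ) - ∑ u, γ u|)
  have hp0 : ∀ v : Fin n → V, 0 ≤ ∏ i, π (v i) :=
    fun v => Finset.prod_nonneg fun i _ => hπ0 _
  have hset : {ω | ε * ∑ u, γ u ≤ |sumApproxW (∑ u, γ u) π X k ω / (k : ℝ) - ∑ u, γ u|}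
      = tup ⁻¹' (↑B : Set (Fin n → V)) := by
    ext ω
    simp only [Set.mem_setOf_eq, Set.mem_preimage, B, Finset.coe_filter, Finset.mem_univ,
      true_and, Set.mem_setOf_eq]
    rw [hWeq ω]
  have hsingleset : ∀ v : Fin n → V,
      tup ⁻¹' {v} = ⋂ j ∈ Finset.Icc 1 n, X j ⁻¹' {extFn n v j} := by
    intro v
    ext ω
    simp only [Set.mem_preimage, Set.mem_singleton_iff, Set.mem_iInter]
    rw [funext_iff]
    constructor
    · intro h j hj
      simp only [Finset.mem_Icc] at hj
      have hj1 : j - 1 < n := by omega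
      rw [extFn_apply _ _ _ hj1, ← h ⟨j - 1, hj1⟩]
      show X j ω = X ((j - 1) + 1) ω
      congr 1
      omega
    · intro h i
      have hilt := i.isLt
      have hji : (i : ℕ) + 1 ∈ Finset.Icc 1 n := by
        simp only [Finset.mem_Icc]
        omega
      have h2 := h _ hji
      show X ((i : ℕ) + 1) ω = v i
      rw [h2, extFn_apply _ _ _ (by omega : (i : ℕ) + 1 - 1 < n)]
      exact congrArg v (by apply Fin.ext; show (i : ℕ) + 1 - 1 = (i : ℕ); omega)
  have hμsingle : ∀ v : Fin n → V, μ (tup ⁻¹' {v}) = ENNReal.ofReal (∏ i, π (v i)) := by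
    intro v
    rw [hsingleset v]
    rw [iIndepFun_iff_measure_inter_preimage_eq_mul.mp hindep (Finset.Icc 1 n)
      (sets := fun j => {extFn n v j}) (fun i _ => measurableSet_singleton _)]
    rw [Finset.prod_congr rfl (fun j hj => hlaw j (Finset.mem_Icc.1 hj).1 (extFn n v j))]
    rw [← ENNReal.ofReal_prod_of_nonneg (fun j _ => hπ0 _)]
    rw [prod_Icc_extFn π n v]
  have hsingle_meas : ∀ v : Fin n → V, MeasurableSet (tup ⁻¹' {v}) := by
    intro v
    rw [hsingleset v]
    exact MeasurableSet.biInter (Finset.Icc 1 n).countable_toSet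
      (fun j _ => (hXmeas j) (measurableSet_singleton _))
  have hdisj : (↑B : Set (Fin n → V)).PairwiseDisjoint (fun v => tup ⁻¹' {v}) := by
    intro v1 _ v2 _ h12
    apply Set.disjoint_left.2
    intro ω h1 h2
    simp only [Set.mem_preimage, Set.mem_singleton_iff] at h1 h2
    exact h12 (by rw [← h1, ← h2])
  have hcount : μ (tup ⁻¹' (↑B : Set (Fin n → V))) = ∑ v ∈ B, μ (tup ⁻¹' {v}) := by
    have hcoe : (↑B : Set (Fin n → V)) = ⋃ v ∈ B, ({v} : Set (Fin n → V)) := by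
      ext w
      simp
    rw [hcoe, Set.preimage_iUnion₂]
    exact measure_biUnion_finset hdisj (fun v _ => hsingle_meas v)
  have hfinal : ∑ v ∈ B, (∏ i, π (v i)) ≤ 2 * δ / 3 := by
    let EU : Finset (Fin n → V) := Finset.univ.filter
      (fun v => (1 + ε) * k ≤ STfun π k (extFn n v))
    let EL : Finset (Fin n → V) := Finset.univ.filter
      (fun v => STfun π k (extFn n v) ≤ (1 - ε) * k)
    have hsub : B ⊆ EU ∪ EL := by
      intro v hv
      simp only [B, Finset.mem_filter, Finset.mem_univ, true_and] at hv
      rw [hev (STfun π k (extFn n v))] at hv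
      simp only [EU, EL, Finset.mem_union, Finset.mem_filter, Finset.mem_univ, true_and]
      rcases abs_cases (STfun π k (extFn n v) - k) with ⟨habs, _⟩ | ⟨habs, _⟩
      · left; rw [habs] at hv; linarith
      · right; rw [habs] at hv; linarith
    have hEU : ∑ v ∈ EU, (∏ i, π (v i))
        ≤ Real.exp (-((k : ℝ) * (ε - Real.log (1 + ε)))) :=
      tail_upper π hπ0 hπ1 hε0 hε1 k hk1 n hn EU (fun v hv => by
        simp only [EU, Finset.mem_filter, Finset.mem_univ, true_and] at hv; exact hv)
    have hEL : ∑ v ∈ EL, (∏ i, π (v i))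
        ≤ Real.exp (-((k : ℝ) * (-Real.log (1 - ε) - ε))) :=
      tail_lower π hπ0 hπ1 hε0 hε1 k hk1 n hn EL (fun v hv => by
        simp only [EL, Finset.mem_filter, Finset.mem_univ, true_and] at hv; exact hv)
    have hup := upper_rate hε0 hε1 hδ0 hδ1 hkreal
    have hlow := lower_rate hε0 hε1 hδ0 hδ1 hkreal
    have h1 : ∑ v ∈ B, (∏ i, π (v i)) ≤ ∑ v ∈ EU ∪ EL, (∏ i, π (v i)) :=
      Finset.sum_le_sum_of_subset_of_nonneg hsub (fun v _ _ => hp0 v)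
    have h2 : ∑ v ∈ EU ∪ EL, (∏ i, π (v i)) + ∑ v ∈ EU ∩ EL, (∏ i, π (v i))
        = ∑ v ∈ EU, (∏ i, π (v i)) + ∑ v ∈ EL, (∏ i, π (v i)) :=
      Finset.sum_union_inter
    have h3 : 0 ≤ ∑ v ∈ EU ∩ EL, (∏ i, π (v i)) := Finset.sum_nonneg fun v _ => hp0 v
    linarith
  calc μ {ω | ε * ∑ u, γ u ≤ |sumApproxW (∑ u, γ u) π X k ω / (k : ℝ) - ∑ u, γ u|}
      = μ (tup ⁻¹' (↑B : Set (Fin n → V))) := by rw [hset]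
    _ = ∑ v ∈ B, μ (tup ⁻¹' {v}) := hcount
    _ = ∑ v ∈ B, ENNReal.ofReal (∏ i, π (v i)) :=
        Finset.sum_congr rfl (fun v _ => hμsingle v)
    _ = ENNReal.ofReal (∑ v ∈ B, ∏ i, π (v i)) :=
        (ENNReal.ofReal_sum_of_nonneg (fun v _ => hp0 v)).symm
    _ ≤ ENNReal.ofReal (2 * δ / 3) := ENNReal.ofReal_le_ofReal hfinal
end

section
/- Let π be a probability distribution on a finite set V and let p̄ ∈ (0, 5/18] be such that π(u) ≤ p̄ for all u ∈ V. Let s = ⌈1/p̄⌉. Then Σ_{u∈V} π(u)·(1 − (1 − π(u))^s) ≥ (4/9)·s·Σ_{u∈V} π(u)². (The left-hand side equals the expected total π-mass of the set of distinct elements obtained from s i.i.d. draws from π.) -/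
open Finset

lemma pow_one_sub_le_quad (x : ℝ) (hx0 : 0 ≤ x) (hx1 : x ≤ 1) (n : ℕ) :
    (1 - x) ^ n ≤ 1 - n * x + n * (n - 1) / 2 * x ^ 2 := by
  induction n with
  | zero => simp
  | succ n ih =>
    have h1 : (0:ℝ) ≤ 1 - x := by linarith
    have h2 : (1 - x) ^ (n + 1) ≤ (1 - n * x + n * (n - 1) / 2 * x ^ 2) * (1 - x) := by
      rw [pow_succ]
      exact mul_le_mul_of_nonneg_right ih h1
    have hn : (0:ℝ) ≤ n := Nat.cast_nonneg n
    have h3 : (0:ℝ) ≤ (n:ℝ) * ((n:ℝ) - 1) := by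
      rcases Nat.eq_zero_or_pos n with h | h
      · simp [h]
      · have : (1:ℝ) ≤ (n:ℝ) := by exact_mod_cast h
        nlinarith
    push_cast
    nlinarith [mul_nonneg (mul_nonneg h3 hx0) (mul_nonneg hx0 hx0)]

/-- If `π` is a probability distribution on a finite set `V` with `π u ≤ p̄ ≤ 5/18` for all
`u` and `s = ⌈1/p̄⌉`, then the expected total `π`-mass of the set of distinct elements
obtained from `s` i.i.d. draws from `π`, namely `∑ u, π u * (1 - (1 - π u)^s)`, is at least
`(4/9) * s * ∑ u, (π u)^2`. -/
theorem expected_mass_of_distinct_draws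
    {V : Type*} [Fintype V]
    (π : V → ℝ) (hπ0 : ∀ u, 0 ≤ π u) (hπ1 : ∑ u, π u = 1)
    (pbar : ℝ) (hp0 : 0 < pbar) (hp1 : pbar ≤ 5 / 18)
    (hbd : ∀ u, π u ≤ pbar)
    (s : ℕ) (hs : s = ⌈1 / pbar⌉₊) :
    (4 / 9 : ℝ) * s * ∑ u, π u ^ 2 ≤ ∑ u, π u * (1 - (1 - π u) ^ s) := by
  have hs1 : 1 ≤ s := by
    rw [hs]
    exact Nat.one_le_ceil_iff.mpr (by positivity)
  have hsub : ((s : ℝ) - 1) * pbar ≤ 1 := by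
    have : (s : ℝ) < 1 / pbar + 1 := by
      rw [hs]; exact Nat.ceil_lt_add_one (by positivity)
    have h2 : ((s:ℝ) - 1) < 1 / pbar := by linarith
    calc ((s:ℝ) - 1) * pbar ≤ (1 / pbar) * pbar :=
          mul_le_mul_of_nonneg_right h2.le hp0.le
      _ = 1 := by field_simp
  rw [mul_assoc, mul_sum, mul_sum]
  apply sum_le_sum
  intro u _
  set x := π u with hx
  have hx0 : 0 ≤ x := hπ0 u
  have hxp : x ≤ pbar := hbd u
  have hx1 : x ≤ 1 := le_trans hxp (by linarith)
  have hkey : ((s:ℝ) - 1) * x ≤ 1 := by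
    have hs1' : (1:ℝ) ≤ (s:ℝ) := by exact_mod_cast hs1
    calc ((s:ℝ) - 1) * x ≤ ((s:ℝ) - 1) * pbar :=
          mul_le_mul_of_nonneg_left hxp (by linarith)
      _ ≤ 1 := hsub
  have hpow := pow_one_sub_le_quad x hx0 hx1 s
  have hs1' : (1:ℝ) ≤ (s:ℝ) := by exact_mod_cast hs1
  nlinarith [mul_nonneg hx0 hx0, sq_nonneg x,
    mul_le_mul_of_nonneg_left hkey (mul_nonneg (mul_nonneg (by linarith : (0:ℝ) ≤ (s:ℝ)) hx0) hx0)]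
end

section
/- Let V be a finite set with |V| = n, let π be a probability distribution on V, let t ≥ 1 be an integer, and let X_1, …, X_t be V-valued random variables (not necessarily independent) such that each X_i has marginal distribution π. Let N = |{X_1, …, X_t}| be the number of distinct states among them and M = Σ_{u ∈ {X_1, …, X_t}} π(u) their aggregate π-mass. Then for all ε, δ, q > 0: if Pr[N ≥ q] ≥ 1 − δ then Pr[M ≥ εq²/(4tn)] ≥ 1 − ε − δ. -/
open MeasureTheory Finset

/-- Growth of the aggregate mass of visited states: if `X 1, …, X t` each have marginal
distribution `π` on a finite set `V` of cardinality `n`, `N` is the number of distinct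
states among them and `M` their aggregate `π`-mass, then for all `ε, δ, q > 0`:
`Pr[N ≥ q] ≥ 1 - δ` implies `Pr[M ≥ ε q² / (4 t n)] ≥ 1 - ε - δ`. -/
theorem mass_of_distinct_states
    {V : Type*} [Fintype V] [DecidableEq V] [MeasurableSpace V] [MeasurableSingletonClass V]
    {Ω : Type*} {mΩ : MeasurableSpace Ω} {μ : Measure Ω} [IsProbabilityMeasure μ]
    (n : ℕ) (hn : Fintype.card V = n)
    (π : V → ℝ) (hπ0 : ∀ u, 0 ≤ π u) (hπ1 : ∑ u, π u = 1)
    (t : ℕ) (ht : 1 ≤ t)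
    (X : ℕ → Ω → V) (hXmeas : ∀ i, Measurable (X i))
    (hmarg : ∀ i ∈ Finset.Icc 1 t, ∀ u : V, μ (X i ⁻¹' {u}) = ENNReal.ofReal (π u))
    (ε δ q : ℝ) (hε : 0 < ε) (hδ : 0 < δ) (hq : 0 < q)
    (hN : ENNReal.ofReal (1 - δ) ≤
      μ {ω | q ≤ (((Finset.Icc 1 t).image fun i => X i ω).card : ℝ)}) :
    ENNReal.ofReal (1 - ε - δ) ≤
      μ {ω | ε * q ^ 2 / (4 * t * n) ≤ ∑ u ∈ (Finset.Icc 1 t).image fun i => X i ω, π u} := by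
  classical
  have hnpos : 0 < n := by
    rcases Nat.eq_zero_or_pos n with h | h
    · exfalso
      have hcard : Fintype.card V = 0 := by omega
      haveI : IsEmpty V := Fintype.card_eq_zero_iff.mp hcard
      simp at hπ1
    · exact h
  have ht0 : (0 : ℝ) < t := by exact_mod_cast ht
  have hn0 : (0 : ℝ) < n := by exact_mod_cast hnpos
  set c : ℝ := ε * q / (2 * t * n) with hc
  have hcpos : 0 < c := div_pos (mul_pos hε hq) (by positivity)
  set L : Finset V := Finset.univ.filter fun u => π u < c with hLdef
  have hLmeas : MeasurableSet (↑L : Set V) := L.measurableSet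
  set f : Ω → ENNReal := fun ω =>
    ∑ i ∈ Finset.Icc 1 t, (X i ⁻¹' (↑L : Set V)).indicator (fun _ => (1 : ENNReal)) ω with hf
  have hfmeas : Measurable f :=
    Finset.measurable_sum _ fun i _ => (measurable_const : Measurable fun _ : Ω => (1 : ENNReal)).indicator ((hXmeas i) hLmeas)
  have hint : ∫⁻ ω, f ω ∂μ = ∑ i ∈ Finset.Icc 1 t, μ (X i ⁻¹' (↑L : Set V)) := by
    simp only [hf]
    rw [lintegral_finset_sum _ fun i _ => (measurable_const : Measurable fun _ : Ω => (1 : ENNReal)).indicator ((hXmeas i) hLmeas)]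
    refine Finset.sum_congr rfl fun i _ => ?_
    rw [lintegral_indicator_const ((hXmeas i) hLmeas), one_mul]
  have hsumL : ∑ u ∈ L, π u ≤ n * c := by
    calc ∑ u ∈ L, π u ≤ L.card • c :=
          Finset.sum_le_card_nsmul _ _ _ fun u hu => (Finset.mem_filter.mp hu).2.le
      _ = (L.card : ℝ) * c := nsmul_eq_mul _ _
      _ ≤ n * c := by
          have hcardL : (L.card : ℝ) ≤ n := by
            have : L.card ≤ n := by
              simpa [hn] using (Finset.card_filter_le Finset.univ fun u => π u < c).trans
                (le_of_eq Finset.card_univ)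
            exact_mod_cast this
          exact mul_le_mul_of_nonneg_right hcardL hcpos.le
  have hμL : ∀ i ∈ Finset.Icc 1 t, μ (X i ⁻¹' (↑L : Set V)) ≤ ENNReal.ofReal (n * c) := by
    intro i hi
    have hU : X i ⁻¹' (↑L : Set V) = ⋃ u ∈ L, X i ⁻¹' {u} := by
      ext ω; simp
    rw [hU]
    calc μ (⋃ u ∈ L, X i ⁻¹' {u}) ≤ ∑ u ∈ L, μ (X i ⁻¹' {u}) :=
          measure_biUnion_finset_le _ _
      _ = ∑ u ∈ L, ENNReal.ofReal (π u) := Finset.sum_congr rfl fun u _ => hmarg i hi u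
      _ = ENNReal.ofReal (∑ u ∈ L, π u) :=
          (ENNReal.ofReal_sum_of_nonneg fun u _ => hπ0 u).symm
      _ ≤ ENNReal.ofReal (n * c) := ENNReal.ofReal_le_ofReal hsumL
  have hintle : ∫⁻ ω, f ω ∂μ ≤ ENNReal.ofReal (ε * q / 2) := by
    rw [hint]
    calc ∑ i ∈ Finset.Icc 1 t, μ (X i ⁻¹' (↑L : Set V))
        ≤ ∑ _i ∈ Finset.Icc 1 t, ENNReal.ofReal (n * c) := Finset.sum_le_sum hμL
      _ = (t : ENNReal) * ENNReal.ofReal (n * c) := by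
          rw [Finset.sum_const, Nat.card_Icc]; simp [mul_comm]
      _ = ENNReal.ofReal ((t : ℝ) * (n * c)) := by
          rw [← ENNReal.ofReal_natCast t, ← ENNReal.ofReal_mul (by positivity)]
      _ = ENNReal.ofReal (ε * q / 2) := by
          congr 1
          field_simp [hc]
          rw [hc]; field_simp
  set B : Set Ω := {ω | ENNReal.ofReal (q / 2) ≤ f ω} with hB
  have hμB : μ B ≤ ENNReal.ofReal ε := by
    have h1 := mul_meas_ge_le_lintegral₀ (μ := μ) hfmeas.aemeasurable (ENNReal.ofReal (q / 2))
    have h2 : ENNReal.ofReal (q / 2) * μ B ≤ ENNReal.ofReal (q / 2) * ENNReal.ofReal ε := by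
      refine h1.trans (hintle.trans ?_)
      rw [← ENNReal.ofReal_mul (by positivity)]
      exact ENNReal.ofReal_le_ofReal (by nlinarith)
    exact (ENNReal.mul_le_mul_iff_right (ENNReal.ofReal_pos.mpr (by positivity)).ne'
      ENNReal.ofReal_ne_top).mp h2
  set A : Set Ω := {ω | q ≤ (((Finset.Icc 1 t).image fun i => X i ω).card : ℝ)} with hA
  have hsub : A ∩ Bᶜ ⊆
      {ω | ε * q ^ 2 / (4 * t * n) ≤ ∑ u ∈ (Finset.Icc 1 t).image fun i => X i ω, π u} := by
    intro ω hω
    obtain ⟨hωA, hωB⟩ := hω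
    set D : Finset V := (Finset.Icc 1 t).image fun i => X i ω with hD
    set k : ℕ := ((Finset.Icc 1 t).filter fun i => X i ω ∈ L).card with hk
    have hfω : f ω = (k : ENNReal) := by
      simp only [hf, Set.indicator_apply, Set.mem_preimage]
      rw [Finset.sum_boole]
      simp [hk]
    have hkq : (k : ℝ) < q / 2 := by
      have : f ω < ENNReal.ofReal (q / 2) := not_le.mp hωB
      rw [hfω, ← ENNReal.ofReal_natCast k] at this
      exact (ENNReal.ofReal_lt_ofReal_iff (by positivity)).mp this
    have hDL : (D ∩ L).card ≤ k := by
      have hss : D ∩ L ⊆ ((Finset.Icc 1 t).filter fun i => X i ω ∈ L).image fun i => X i ω := by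
        intro u hu
        obtain ⟨hDu, hLu⟩ := Finset.mem_inter.mp hu
        obtain ⟨i, hi, rfl⟩ := Finset.mem_image.mp hDu
        exact Finset.mem_image.mpr ⟨i, Finset.mem_filter.mpr ⟨hi, hLu⟩, rfl⟩
      exact (Finset.card_le_card hss).trans Finset.card_image_le
    have hcards : (D ∩ L).card + (D \ L).card = D.card := Finset.card_inter_add_card_sdiff D L
    have hsdiff : q / 2 ≤ ((D \ L).card : ℝ) := by
      have hDq : q ≤ (D.card : ℝ) := hωA
      have : ((D ∩ L).card : ℝ) + ((D \ L).card : ℝ) = (D.card : ℝ) := by exact_mod_cast hcards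
      have hDLr : ((D ∩ L).card : ℝ) ≤ k := by exact_mod_cast hDL
      linarith
    have hheavy : ∀ u ∈ D \ L, c ≤ π u := by
      intro u hu
      have : u ∉ L := (Finset.mem_sdiff.mp hu).2
      have : ¬ π u < c := by
        intro hlt
        exact this (Finset.mem_filter.mpr ⟨Finset.mem_univ u, hlt⟩)
      linarith [not_lt.mp this]
    calc ε * q ^ 2 / (4 * t * n) = (q / 2) * c := by
          rw [hc]; field_simp; ring
      _ ≤ ((D \ L).card : ℝ) * c := mul_le_mul_of_nonneg_right hsdiff hcpos.le
      _ = (D \ L).card • c := (nsmul_eq_mul _ _).symm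
      _ ≤ ∑ u ∈ D \ L, π u := Finset.card_nsmul_le_sum _ _ _ hheavy
      _ ≤ ∑ u ∈ D, π u :=
          Finset.sum_le_sum_of_subset_of_nonneg (Finset.sdiff_subset) fun u _ _ => hπ0 u
  calc ENNReal.ofReal (1 - ε - δ) = ENNReal.ofReal ((1 - δ) - ε) := by ring_nf
    _ = ENNReal.ofReal (1 - δ) - ENNReal.ofReal ε := ENNReal.ofReal_sub _ hε.le
    _ ≤ μ A - μ B := tsub_le_tsub hN hμB
    _ ≤ μ (A ∩ Bᶜ) := by
        rw [tsub_le_iff_right]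
        calc μ A ≤ μ ((A ∩ Bᶜ) ∪ B) := measure_mono (by
              intro ω hω
              by_cases h : ω ∈ B
              · exact Or.inr h
              · exact Or.inl ⟨hω, h⟩)
          _ ≤ μ (A ∩ Bᶜ) + μ B := measure_union_le _ _
    _ ≤ μ _ := measure_mono hsub
end

section
/- Let n, k be integers with 1 ≤ k and 2k ≤ n, let x ∈ ℝⁿ be given by x_j = 1 for j ≤ k and x_j = √k/n for j > k, let Γ = Σ_{j=1}^n x_j and π = x/Γ. Let X_1, …, X_m be i.i.d. random variables with values in {1, …, n} and law π. Then the probability that some draw lands on an index j > k, or that some two draws coincide, is at most m/√k + m²/k; that is, Pr[(∃ i : X_i > k) or (∃ i < j : X_i = X_j)] ≤ m/√k + m²/k. -/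
open MeasureTheory ProbabilityTheory Finset
open scoped ENNReal

/-- Indistinguishability event bound in the lower-bound proof for sum estimation:
for `m` i.i.d. draws `X 1, …, X m` from `π = x / ∑ x`, where `x` has `k` entries equal to
`1` (the indices `j` with `(j : ℕ) < k`) and `n - k` entries equal to `√k/n`, the
probability that some draw lands on an index `j` with `(j : ℕ) ≥ k`, or that two draws
coincide, is at most `m/√k + m²/k`. -/
theorem lower_bound_indistinguishability
    {Ω : Type*} {mΩ : MeasurableSpace Ω} {μ : Measure Ω} [IsProbabilityMeasure μ]
    (n k m : ℕ) (hk : 1 ≤ k) (hn : 2 * k ≤ n)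
    (x : Fin n → ℝ) (hx : ∀ j : Fin n, x j = if (j : ℕ) < k then 1 else Real.sqrt k / n)
    (π : Fin n → ℝ) (hπ : ∀ j, π j = x j / ∑ j', x j')
    (X : Fin m → Ω → Fin n) (hXmeas : ∀ i, Measurable (X i))
    (hindep : iIndepFun X μ)
    (hlaw : ∀ (i : Fin m) (u : Fin n), μ (X i ⁻¹' {u}) = ENNReal.ofReal (π u)) :
    μ {ω | (∃ i : Fin m, k ≤ (X i ω : ℕ)) ∨ ∃ i j : Fin m, i < j ∧ X i ω = X j ω}
      ≤ ENNReal.ofReal ((m : ℝ) / Real.sqrt k + (m : ℝ) ^ 2 / k) := by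
  have hkn : k ≤ n := le_trans (by omega) hn
  have hn0 : 0 < n := by omega
  have hkR : (0 : ℝ) < k := by exact_mod_cast hk
  have hnR : (0 : ℝ) < n := by exact_mod_cast hn0
  have hsq : 0 < Real.sqrt k := Real.sqrt_pos.mpr hkR
  set Γ := ∑ j', x j' with hΓdef
  -- basic facts about x
  have hxnonneg : ∀ j, 0 ≤ x j := by
    intro j; rw [hx j]; split <;> positivity
  have hsqk : Real.sqrt k ≤ k := by
    nlinarith [Real.sq_sqrt hkR.le, Real.sqrt_nonneg (k : ℝ), Real.sqrt_le_sqrt (show (1:ℝ) ≤ k by exact_mod_cast hk), Real.sqrt_one]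
  have hxle : ∀ j, x j ≤ 1 := by
    intro j; rw [hx j]; split
    · exact le_rfl
    · rw [div_le_one hnR]
      calc Real.sqrt k ≤ k := hsqk
        _ ≤ n := by exact_mod_cast hkn.trans_eq rfl
  -- card of the head set
  have hcard : #{j : Fin n | (j : ℕ) < k} = k := by
    rw [Finset.card_filter, Fin.sum_univ_eq_sum_range (fun j => if j < k then 1 else 0),
      ← Finset.card_filter]
    have : ((Finset.range n).filter (· < k)) = Finset.range k := by
      ext a; simp only [mem_filter, mem_range]
      exact ⟨fun h' => h'.2, fun h' => ⟨h'.trans_le hkn, h'⟩⟩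
    rw [this, Finset.card_range]
  have hΓk : (k : ℝ) ≤ Γ := by
    have h1 : ∑ j ∈ {j : Fin n | (j : ℕ) < k}, x j = k := by
      rw [Finset.sum_congr rfl (fun j hj => by
        rw [hx j, if_pos (by simpa using hj)]), Finset.sum_const, hcard]
      simp
    calc (k : ℝ) = ∑ j ∈ {j : Fin n | (j : ℕ) < k}, x j := h1.symm
      _ ≤ Γ := Finset.sum_le_sum_of_subset_of_nonneg (Finset.subset_univ _)
          (fun j _ _ => hxnonneg j)
  have hΓpos : 0 < Γ := lt_of_lt_of_le hkR hΓk
  have hπnonneg : ∀ u, 0 ≤ π u := fun u => by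
    rw [hπ u]; exact div_nonneg (hxnonneg u) hΓpos.le
  have hπle : ∀ u, π u ≤ 1 / k := fun u => by
    rw [hπ u]
    calc x u / Γ ≤ 1 / Γ := by gcongr; exact hxle u
      _ ≤ 1 / k := by gcongr
  have hπsum : ∑ u, π u = 1 := by
    rw [Finset.sum_congr rfl (fun u _ => hπ u), ← Finset.sum_div, div_self hΓpos.ne']
  -- tail sum bound
  have hsqdiv : Real.sqrt k / k = 1 / Real.sqrt k := by
    rw [eq_div_iff hsq.ne', div_mul_eq_mul_div, Real.mul_self_sqrt hkR.le, div_self hkR.ne']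
  have htail : ∑ u ∈ ({u : Fin n | k ≤ (u : ℕ)} : Finset (Fin n)), π u ≤ 1 / Real.sqrt k := by
    have h1 : ∀ u ∈ ({u : Fin n | k ≤ (u : ℕ)} : Finset (Fin n)),
        π u = (Real.sqrt k / n) / Γ := by
      intro u hu
      rw [hπ u, hx u, if_neg (by simpa using hu)]
    rw [Finset.sum_congr rfl h1, Finset.sum_const]
    have hcardle : #({u : Fin n | k ≤ (u : ℕ)} : Finset (Fin n)) ≤ n := by
      exact le_trans (Finset.card_filter_le _ _) (by simp)
    calc (#({u : Fin n | k ≤ (u : ℕ)} : Finset (Fin n)) : ℕ) • (Real.sqrt k / n / Γ)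
        = (#({u : Fin n | k ≤ (u : ℕ)} : Finset (Fin n)) : ℝ) * (Real.sqrt k / n / Γ) := by
          rw [nsmul_eq_mul]
      _ ≤ (n : ℝ) * (Real.sqrt k / n / Γ) := by
          apply mul_le_mul_of_nonneg_right _ (by positivity)
          exact_mod_cast hcardle
      _ = Real.sqrt k / Γ := by
          field_simp
      _ ≤ Real.sqrt k / k := by gcongr
      _ = 1 / Real.sqrt k := hsqdiv
  -- collision sum bound
  have hcoll : ∑ u, π u * π u ≤ 1 / k := by
    calc ∑ u, π u * π u ≤ ∑ u, (1 / (k : ℝ)) * π u := by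
          apply Finset.sum_le_sum
          intro u _
          exact mul_le_mul_of_nonneg_right (hπle u) (hπnonneg u)
      _ = 1 / k := by rw [← Finset.mul_sum, hπsum, mul_one]
  -- events
  set A : Fin m → Set Ω := fun i => {ω | k ≤ (X i ω : ℕ)} with hA
  set B : Fin m → Fin m → Set Ω := fun i j => {ω | X i ω = X j ω} with hB
  have hApre : ∀ i, A i = ⋃ u ∈ ({u : Fin n | k ≤ (u : ℕ)} : Finset (Fin n)), X i ⁻¹' {u} := by
    intro i
    ext ω
    simp [hA, eq_comm]
  have hAbound : ∀ i, μ (A i) ≤ ENNReal.ofReal (1 / Real.sqrt k) := by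
    intro i
    rw [hApre i]
    calc μ (⋃ u ∈ ({u : Fin n | k ≤ (u : ℕ)} : Finset (Fin n)), X i ⁻¹' {u})
        ≤ ∑ u ∈ ({u : Fin n | k ≤ (u : ℕ)} : Finset (Fin n)), μ (X i ⁻¹' {u}) :=
          measure_biUnion_finset_le _ _
      _ = ∑ u ∈ ({u : Fin n | k ≤ (u : ℕ)} : Finset (Fin n)), ENNReal.ofReal (π u) := by
          exact Finset.sum_congr rfl (fun u _ => hlaw i u)
      _ = ENNReal.ofReal (∑ u ∈ ({u : Fin n | k ≤ (u : ℕ)} : Finset (Fin n)), π u) :=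
          (ENNReal.ofReal_sum_of_nonneg (fun u _ => hπnonneg u)).symm
      _ ≤ ENNReal.ofReal (1 / Real.sqrt k) := ENNReal.ofReal_le_ofReal htail
  have hBbound : ∀ i j : Fin m, i < j → μ (B i j) ≤ ENNReal.ofReal (1 / k) := by
    intro i j hij
    have hBeq : B i j = ⋃ u : Fin n, (X i ⁻¹' {u} ∩ X j ⁻¹' {u}) := by
      ext ω
      simp only [hB, Set.mem_setOf_eq, Set.mem_iUnion, Set.mem_inter_iff, Set.mem_preimage,
        Set.mem_singleton_iff]
      exact ⟨fun h => ⟨X j ω, h, rfl⟩, fun ⟨u, h1, h2⟩ => h1.trans h2.symm⟩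
    rw [hBeq]
    calc μ (⋃ u : Fin n, (X i ⁻¹' {u} ∩ X j ⁻¹' {u}))
        ≤ ∑' u : Fin n, μ (X i ⁻¹' {u} ∩ X j ⁻¹' {u}) := measure_iUnion_le _
      _ = ∑ u : Fin n, μ (X i ⁻¹' {u} ∩ X j ⁻¹' {u}) := tsum_fintype _
      _ = ∑ u : Fin n, ENNReal.ofReal (π u * π u) := by
          apply Finset.sum_congr rfl
          intro u _
          rw [(hindep.indepFun hij.ne).measure_inter_preimage_eq_mul {u} {u}
            (measurableSet_singleton u) (measurableSet_singleton u), hlaw i u, hlaw j u,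
            ← ENNReal.ofReal_mul (hπnonneg u)]
      _ = ENNReal.ofReal (∑ u : Fin n, π u * π u) :=
          (ENNReal.ofReal_sum_of_nonneg (fun u _ => mul_nonneg (hπnonneg u) (hπnonneg u))).symm
      _ ≤ ENNReal.ofReal (1 / k) := ENNReal.ofReal_le_ofReal hcoll
  -- combine
  have hsub : {ω | (∃ i : Fin m, k ≤ (X i ω : ℕ)) ∨ ∃ i j : Fin m, i < j ∧ X i ω = X j ω}
      ⊆ (⋃ i, A i) ∪ (⋃ i, ⋃ j, ⋃ (_ : i < j), B i j) := by
    intro ω hω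
    rcases hω with ⟨i, hi⟩ | ⟨i, j, hij, hXij⟩
    · exact Or.inl (Set.mem_iUnion.mpr ⟨i, hi⟩)
    · exact Or.inr (Set.mem_iUnion.mpr ⟨i, Set.mem_iUnion.mpr ⟨j, Set.mem_iUnion.mpr ⟨hij, hXij⟩⟩⟩)
  calc μ {ω | (∃ i : Fin m, k ≤ (X i ω : ℕ)) ∨ ∃ i j : Fin m, i < j ∧ X i ω = X j ω}
      ≤ μ ((⋃ i, A i) ∪ (⋃ i, ⋃ j, ⋃ (_ : i < j), B i j)) := measure_mono hsub
    _ ≤ μ (⋃ i, A i) + μ (⋃ i, ⋃ j, ⋃ (_ : i < j), B i j) := measure_union_le _ _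
    _ ≤ (∑ i : Fin m, μ (A i)) + ∑ i : Fin m, ∑ j : Fin m, μ (⋃ (_ : i < j), B i j) := by
        gcongr
        · exact (measure_iUnion_le _).trans_eq (tsum_fintype _)
        · calc μ (⋃ i, ⋃ j, ⋃ (_ : i < j), B i j)
              ≤ ∑' i : Fin m, μ (⋃ j, ⋃ (_ : i < j), B i j) := measure_iUnion_le _
            _ = ∑ i : Fin m, μ (⋃ j, ⋃ (_ : i < j), B i j) := tsum_fintype _
            _ ≤ ∑ i : Fin m, ∑ j : Fin m, μ (⋃ (_ : i < j), B i j) := by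
                apply Finset.sum_le_sum
                intro i _
                exact (measure_iUnion_le _).trans_eq (tsum_fintype _)
    _ ≤ (∑ _i : Fin m, ENNReal.ofReal (1 / Real.sqrt k))
        + ∑ _i : Fin m, ∑ _j : Fin m, ENNReal.ofReal (1 / k) := by
        gcongr with i _ i _ j _
        · exact hAbound i
        · by_cases hij : i < j
          · simpa [hij] using hBbound i j hij
          · simp [hij]
    _ = (m : ℝ≥0∞) * ENNReal.ofReal (1 / Real.sqrt k)
        + (m : ℝ≥0∞) * ((m : ℝ≥0∞) * ENNReal.ofReal (1 / k)) := by
        simp [Finset.sum_const, mul_comm]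
    _ ≤ ENNReal.ofReal ((m : ℝ) / Real.sqrt k + (m : ℝ) ^ 2 / k) := by
        rw [ENNReal.ofReal_add (by positivity) (by positivity)]
        gcongr
        · rw [← ENNReal.ofReal_natCast m, ← ENNReal.ofReal_mul (by positivity), mul_one_div]
        · rw [← ENNReal.ofReal_natCast m, ← ENNReal.ofReal_mul (by positivity),
            ← ENNReal.ofReal_mul (by positivity)]
          apply ENNReal.ofReal_le_ofReal
          rw [mul_one_div, ← mul_div_assoc, ← sq]
end
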